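/- Suppose the edge {u,v} is admissible. If e ∈ K is an edge with e ∉ {{u,v}, e₁′, e₂′} and e is paired with a triangle r in K, then ξ(e) is paired with ξ(r) in the contracted complex K' (with respect to the induced order and induced height). -/

import Mathlib

open Classical Finset

noncomputable section

variable {V : Type*} [Fintype V] [DecidableEq V]

/-- `K` is a finite abstract simplicial complex on the vertex set `V`. -/
def IsComplex (K : Finset (Finset V)) : Prop :=
  (∀ σ ∈ K, σ.Nonempty) ∧ ∀ σ ∈ K, ∀ τ : Finset V, τ ⊆ σ → τ.Nonempty → τ ∈ K

/-- `h` is a height function on `K`. -/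
def IsHeight (K : Finset (Finset V)) (h : Finset V → ℝ) : Prop :=
  ∀ σ ∈ K, ∀ τ ∈ K, σ ⊆ τ → h σ ≤ h τ

/-- The vertex map sending `v` to `u` and fixing all other vertices. -/
def cmap (u v : V) : V → V := fun x => if x = v then u else x

/-- The contraction `ξ` on simplices. -/
def xi (u v : V) (σ : Finset V) : Finset V := σ.image (cmap u v)

/-- The link of a simplex `σ` in `K`. -/
def lk (K : Finset (Finset V)) (σ : Finset V) : Finset (Finset V) :=
  K.filter fun τ => τ ∩ σ = ∅ ∧ τ ∪ σ ∈ K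

/-- The edge `{u,v}` satisfies the link condition. -/
def LinkCond (K : Finset (Finset V)) (u v : V) : Prop :=
  lk K {u, v} = lk K {u} ∩ lk K {v}

/-- `K` is a `2`-dimensional complex in which every simplex is the face of a triangle and
every edge is contained in exactly two triangles (the combinatorial consequences of the
underlying space being a closed `2`-manifold). -/
def ClosedTwoManifold (K : Finset (Finset V)) : Prop :=
  (∀ σ ∈ K, σ.card ≤ 3) ∧
  (∀ σ ∈ K, ∃ t ∈ K, t.card = 3 ∧ σ ⊆ t) ∧
  (∀ e ∈ K, e.card = 2 → ∃ s ∈ K, ∃ t ∈ K, s ≠ t ∧ s.card = 3 ∧ t.card = 3 ∧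
    e ⊆ s ∧ e ⊆ t ∧ ∀ r ∈ K, r.card = 3 → e ⊆ r → r = s ∨ r = t)

/-- `prec` is a linear order on `K` refining the height function, with ties broken by
dimension (lower dimensional simplices first). -/
def PrecOK (K : Finset (Finset V)) (h : Finset V → ℝ)
    (prec : Finset V → Finset V → Prop) : Prop :=
  (∀ σ, ¬ prec σ σ) ∧
  (∀ σ τ ρ, prec σ τ → prec τ ρ → prec σ ρ) ∧
  (∀ σ ∈ K, ∀ τ ∈ K, σ ≠ τ → prec σ τ ∨ prec τ σ) ∧
  (∀ σ ∈ K, ∀ τ ∈ K, h σ < h τ → prec σ τ) ∧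
  (∀ σ ∈ K, ∀ τ ∈ K, h σ = h τ → σ.card < τ.card → prec σ τ)

/-- The graph `G_{≺e}` on the vertices of `K` whose edges are the edges of `K` strictly
preceding `e` under `≺`. -/
def vertGraph (K : Finset (Finset V)) (prec : Finset V → Finset V → Prop)
    (e : Finset V) : SimpleGraph V where
  Adj x y := x ≠ y ∧ ({x, y} : Finset V) ∈ K ∧ prec {x, y} e
  symm := by
    constructor
    rintro x y ⟨hxy, hK, hp⟩
    exact ⟨hxy.symm, by rwa [Finset.pair_comm], by rwa [Finset.pair_comm]⟩
  loopless := by constructor; rintro x ⟨hx, -⟩; exact hx rfl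

/-- The graph `G^{≻e}` on the triangles of `K`, two triangles being adjacent if they share
an edge strictly succeeding `e` under `≺`. -/
def triGraph (K : Finset (Finset V)) (prec : Finset V → Finset V → Prop)
    (e : Finset V) : SimpleGraph (Finset V) where
  Adj s t := s ≠ t ∧ s ∈ K ∧ t ∈ K ∧ s.card = 3 ∧ t.card = 3 ∧
    ∃ d : Finset V, d ∈ K ∧ d.card = 2 ∧ d ⊆ s ∧ d ⊆ t ∧ prec e d
  symm := by
    constructor
    rintro s t ⟨h1, h2, h3, h4, h5, d, hd1, hd2, hd3, hd4, hd5⟩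
    exact ⟨h1.symm, h3, h2, h5, h4, d, hd1, hd2, hd4, hd3, hd5⟩
  loopless := by constructor; rintro s ⟨hs, -⟩; exact hs rfl

/-- `w` is the `≺`-least vertex of the connected component of `x`. -/
def LeastVert (G : SimpleGraph V) (prec : Finset V → Finset V → Prop) (x w : V) : Prop :=
  G.Reachable x w ∧ ∀ w', G.Reachable x w' → w = w' ∨ prec {w} {w'}

/-- `w` is the `≺`-greatest triangle of the connected component of `s`. -/
def GreatestTri (G : SimpleGraph (Finset V)) (prec : Finset V → Finset V → Prop)
    (s w : Finset V) : Prop :=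
  G.Reachable s w ∧ ∀ w', G.Reachable s w' → w = w' ∨ prec w' w

/-- The edge `e = {x,y}` is paired with the vertex `w`: the endpoints `x` and `y` lie in
distinct connected components of `G_{≺e}` and `w` is the `≺`-greater of the two `≺`-least
vertices of those components. -/
def PairedVE (K : Finset (Finset V)) (prec : Finset V → Finset V → Prop)
    (w : V) (e : Finset V) : Prop :=
  ∃ x y wx wy, e = {x, y} ∧ x ≠ y ∧ e ∈ K ∧
    ¬ (vertGraph K prec e).Reachable x y ∧
    LeastVert (vertGraph K prec e) prec x wx ∧
    LeastVert (vertGraph K prec e) prec y wy ∧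
    ((prec {wx} {wy} ∧ w = wy) ∨ (prec {wy} {wx} ∧ w = wx))

/-- The edge `e`, contained in the two triangles `s` and `t`, is paired with the triangle
`w`: `s` and `t` lie in distinct connected components of `G^{≻e}` and `w` is the
`≺`-smaller of the two `≺`-greatest triangles of those components. -/
def PairedET (K : Finset (Finset V)) (prec : Finset V → Finset V → Prop)
    (e w : Finset V) : Prop :=
  ∃ s t ws wt : Finset V, s ≠ t ∧ s ∈ K ∧ t ∈ K ∧ s.card = 3 ∧ t.card = 3 ∧
    e ⊆ s ∧ e ⊆ t ∧ e ∈ K ∧ e.card = 2 ∧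
    ¬ (triGraph K prec e).Reachable s t ∧
    GreatestTri (triGraph K prec e) prec s ws ∧
    GreatestTri (triGraph K prec e) prec t wt ∧
    ((prec ws wt ∧ w = ws) ∨ (prec wt ws ∧ w = wt))

/-- `σ` is the `≺`-least `ξ`-preimage in `K` of `σ'`. -/
def MinPre (K : Finset (Finset V)) (u v : V) (prec : Finset V → Finset V → Prop)
    (σ' σ : Finset V) : Prop :=
  σ ∈ K ∧ xi u v σ = σ' ∧ ∀ ρ ∈ K, xi u v ρ = σ' → ρ = σ ∨ prec σ ρ

/-- The order induced on the contracted complex `K'`: `σ' ≺ τ'` iff the `≺`-least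
`ξ`-preimage of `σ'` precedes that of `τ'`. -/
def precInd (K : Finset (Finset V)) (u v : V) (prec : Finset V → Finset V → Prop)
    (σ' τ' : Finset V) : Prop :=
  ∃ σ τ : Finset V, MinPre K u v prec σ' σ ∧ MinPre K u v prec τ' τ ∧ prec σ τ

/-! ### Auxiliary development -/

/-- Bundle of all the standing hypotheses of the main theorem. -/
structure Ctx (V : Type*) [Fintype V] [DecidableEq V] where
  K : Finset (Finset V)
  h : Finset V → ℝ
  u : V
  v : V
  prec : Finset V → Finset V → Prop
  t₁ : Finset V
  t₂ : Finset V
  e₁ : Finset V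
  e₁' : Finset V
  e₂ : Finset V
  e₂' : Finset V
  hK : IsComplex K
  hman : ClosedTwoManifold K
  hh : IsHeight K h
  hprec : PrecOK K h prec
  huv : ({u, v} : Finset V) ∈ K
  hne : u ≠ v
  huvprec : prec {u} {v}
  ht1 : t₁ ∈ K
  ht1c : t₁.card = 3
  ht1uv : ({u, v} : Finset V) ⊆ t₁
  ht2 : t₂ ∈ K
  ht2c : t₂.card = 3
  ht2uv : ({u, v} : Finset V) ⊆ t₂
  ht12 : t₁ ≠ t₂
  honly : ∀ t ∈ K, t.card = 3 → ({u, v} : Finset V) ⊆ t → t = t₁ ∨ t = t₂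
  he1 : e₁ ⊆ t₁
  he1c : e₁.card = 2
  he1uv : e₁ ≠ {u, v}
  he1' : e₁' ⊆ t₁
  he1'c : e₁'.card = 2
  he1'uv : e₁' ≠ {u, v}
  he11' : e₁ ≠ e₁'
  hp1 : prec e₁ e₁'
  he2 : e₂ ⊆ t₂
  he2c : e₂.card = 2
  he2uv : e₂ ≠ {u, v}
  he2' : e₂' ⊆ t₂
  he2'c : e₂'.card = 2
  he2'uv : e₂' ≠ {u, v}
  he22' : e₂ ≠ e₂'
  hp2 : prec e₂ e₂'
  hlink : LinkCond K u v
  hpairuv : PairedVE K prec v {u, v}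
  hpair1 : PairedET K prec e₁' t₁
  hpair2 : PairedET K prec e₂' t₂

namespace Ctx

variable {V : Type*} [Fintype V] [DecidableEq V] (C : Ctx V)

/-- The swapped context, exchanging the roles of `t₁` and `t₂`. -/
def swap : Ctx V where
  K := C.K
  h := C.h
  u := C.u
  v := C.v
  prec := C.prec
  t₁ := C.t₂
  t₂ := C.t₁
  e₁ := C.e₂
  e₁' := C.e₂'
  e₂ := C.e₁
  e₂' := C.e₁'
  hK := C.hK
  hman := C.hman
  hh := C.hh
  hprec := C.hprec
  huv := C.huv
  hne := C.hne
  huvprec := C.huvprec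
  ht1 := C.ht2
  ht1c := C.ht2c
  ht1uv := C.ht2uv
  ht2 := C.ht1
  ht2c := C.ht1c
  ht2uv := C.ht1uv
  ht12 := C.ht12.symm
  honly := fun t ht h3 hs => (C.honly t ht h3 hs).symm
  he1 := C.he2
  he1c := C.he2c
  he1uv := C.he2uv
  he1' := C.he2'
  he1'c := C.he2'c
  he1'uv := C.he2'uv
  he11' := C.he22'
  hp1 := C.hp2
  he2 := C.he1
  he2c := C.he1c
  he2uv := C.he1uv
  he2' := C.he1'
  he2'c := C.he1'c
  he2'uv := C.he1'uv
  he22' := C.he11'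
  hp2 := C.hp1
  hlink := C.hlink
  hpairuv := C.hpairuv
  hpair1 := C.hpair2
  hpair2 := C.hpair1

/-- The edge `{u,v}`. -/
def uvS : Finset V := {C.u, C.v}

@[simp] lemma swap_uvS : C.swap.uvS = C.uvS := rfl

lemma uvS_def : C.uvS = {C.u, C.v} := rfl

lemma uvS_card : C.uvS.card = 2 := Finset.card_pair C.hne

lemma uvS_mem : C.uvS ∈ C.K := C.huv

lemma uvS_subset_t1 : C.uvS ⊆ C.t₁ := C.ht1uv

/-! #### Order lemmas -/

lemma prec_irrefl (σ : Finset V) : ¬ C.prec σ σ := C.hprec.1 σ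

lemma prec_trans {σ τ ρ : Finset V} (h1 : C.prec σ τ) (h2 : C.prec τ ρ) : C.prec σ ρ :=
  C.hprec.2.1 σ τ ρ h1 h2

lemma prec_asymm {σ τ : Finset V} (h1 : C.prec σ τ) : ¬ C.prec τ σ :=
  fun h2 => C.prec_irrefl σ (C.prec_trans h1 h2)

lemma prec_total {σ τ : Finset V} (hσ : σ ∈ C.K) (hτ : τ ∈ C.K) (hne : σ ≠ τ) :
    C.prec σ τ ∨ C.prec τ σ := C.hprec.2.2.1 σ hσ τ hτ hne

lemma prec_of_not {σ τ : Finset V} (hσ : σ ∈ C.K) (hτ : τ ∈ C.K) (hne : σ ≠ τ)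
    (h : ¬ C.prec τ σ) : C.prec σ τ := (C.prec_total hσ hτ hne).resolve_right h

/-- A proper face precedes its cofaces. -/
lemma prec_of_ssubset {σ τ : Finset V} (hσ : σ ∈ C.K) (hτ : τ ∈ C.K) (hss : σ ⊂ τ) :
    C.prec σ τ := by
  have hle : C.h σ ≤ C.h τ := C.hh σ hσ τ hτ hss.subset
  rcases lt_or_eq_of_le hle with hlt | heq
  · exact C.hprec.2.2.2.1 σ hσ τ hτ hlt
  · exact C.hprec.2.2.2.2 σ hσ τ hτ heq (Finset.card_lt_card hss)

/-! #### Basic facts about the complex -/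

lemma down {σ τ : Finset V} (hτ : τ ∈ C.K) (hs : σ ⊆ τ) (hn : σ.Nonempty) : σ ∈ C.K :=
  C.hK.2 τ hτ σ hs hn

lemma he1K : C.e₁ ∈ C.K := C.down C.ht1 C.he1 (Finset.card_pos.mp (by rw [C.he1c]; norm_num))
lemma he1'K : C.e₁' ∈ C.K := C.down C.ht1 C.he1' (Finset.card_pos.mp (by rw [C.he1'c]; norm_num))
lemma he2K : C.e₂ ∈ C.K := C.swap.he1K
lemma he2'K : C.e₂' ∈ C.K := C.swap.he1'K

/-- A 2-element subset of a triangle containing `{u,v}` that lies in both triangles is `{u,v}`. -/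
lemma inter_t1_t2 {d : Finset V} (hd2 : d.card = 2) (h1 : d ⊆ C.t₁) (h2 : d ⊆ C.t₂) :
    d = C.uvS := by
  -- t₁ ∩ t₂ ⊆ {u,v}
  have hsub : C.t₁ ∩ C.t₂ ⊆ C.uvS := by
    intro x hx
    rw [Finset.mem_inter] at hx
    by_contra hxuv
    -- then t₁ = {u,v,x} = t₂
    have h3 : insert x C.uvS ⊆ C.t₁ := by
      intro y hy
      rcases Finset.mem_insert.mp hy with rfl | hy
      · exact hx.1
      · exact C.ht1uv hy
    have h4 : insert x C.uvS ⊆ C.t₂ := by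
      intro y hy
      rcases Finset.mem_insert.mp hy with rfl | hy
      · exact hx.2
      · exact C.ht2uv hy
    have hcard : (insert x C.uvS).card = 3 := by
      rw [Finset.card_insert_of_notMem hxuv]
      rw [C.uvS_card]
    have e1 : C.t₁ = insert x C.uvS := (Finset.eq_of_subset_of_card_le h3 (by rw [hcard, C.ht1c])).symm
    have e2 : C.t₂ = insert x C.uvS := (Finset.eq_of_subset_of_card_le h4 (by rw [hcard, C.ht2c])).symm
    exact C.ht12 (e1.trans e2.symm)
  have : d ⊆ C.uvS := fun x hx => hsub (Finset.mem_inter.mpr ⟨h1 hx, h2 hx⟩)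
  exact Finset.eq_of_subset_of_card_le this (by rw [hd2, C.uvS_card])

lemma he1_ne_e2 : C.e₁ ≠ C.e₂ := fun h => C.he1uv (C.inter_t1_t2 C.he1c C.he1 (h ▸ C.he2))
lemma he1_ne_e2' : C.e₁ ≠ C.e₂' := fun h => C.he1uv (C.inter_t1_t2 C.he1c C.he1 (h ▸ C.he2'))
lemma he1'_ne_e2 : C.e₁' ≠ C.e₂ := fun h => C.he1'uv (C.inter_t1_t2 C.he1'c C.he1' (h ▸ C.he2))
lemma he1'_ne_e2' : C.e₁' ≠ C.e₂' := fun h => C.he1'uv (C.inter_t1_t2 C.he1'c C.he1' (h ▸ C.he2'))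

/-! #### The third vertices `a` and `b` -/

lemma exists_third : ∃ a : V, a ∉ C.uvS ∧ C.t₁ = insert a C.uvS := by
  have hc : (C.t₁ \ C.uvS).card = 1 := by
    rw [Finset.card_sdiff_of_subset C.uvS_subset_t1, C.ht1c, C.uvS_card]
  obtain ⟨a, ha⟩ := Finset.card_eq_one.mp hc
  have ham : a ∈ C.t₁ \ C.uvS := ha ▸ Finset.mem_singleton_self a
  rw [Finset.mem_sdiff] at ham
  refine ⟨a, ham.2, ?_⟩
  refine (Finset.eq_of_subset_of_card_le ?_ ?_).symm
  · intro y hy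
    rcases Finset.mem_insert.mp hy with rfl | hy
    · exact ham.1
    · exact C.ht1uv hy
  · rw [C.ht1c, Finset.card_insert_of_notMem ham.2, C.uvS_card]

/-- The third vertex of `t₁`. -/
def a : V := (C.exists_third).choose

lemma ha_not_uv : C.a ∉ C.uvS := (C.exists_third).choose_spec.1
lemma ht1_eq : C.t₁ = insert C.a C.uvS := (C.exists_third).choose_spec.2
lemma ha_ne_u : C.a ≠ C.u := fun h => C.ha_not_uv (by rw [h]; exact Finset.mem_insert_self _ _)
lemma ha_ne_v : C.a ≠ C.v := fun h => C.ha_not_uv (by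
  rw [h]; exact Finset.mem_insert_of_mem (Finset.mem_singleton_self _))
lemma ha_mem_t1 : C.a ∈ C.t₁ := by rw [C.ht1_eq]; exact Finset.mem_insert_self _ _

/-- The third vertex of `t₂`. -/
def b : V := C.swap.a

lemma hb_ne_u : C.b ≠ C.u := C.swap.ha_ne_u
lemma hb_ne_v : C.b ≠ C.v := C.swap.ha_ne_v
lemma ht2_eq : C.t₂ = insert C.b C.uvS := C.swap.ht1_eq
lemma hb_mem_t2 : C.b ∈ C.t₂ := C.swap.ha_mem_t1

lemma ha_ne_b : C.a ≠ C.b := by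
  intro h
  apply C.ht12
  rw [C.ht1_eq, C.ht2_eq, h]

/-- A 2-element subset of `t₁` is `{u,v}`, `{u,a}` or `{v,a}`. -/
lemma two_subset_t1 {d : Finset V} (hd : d ⊆ C.t₁) (hd2 : d.card = 2) :
    d = C.uvS ∨ d = {C.u, C.a} ∨ d = {C.v, C.a} := by
  obtain ⟨x, y, hxy, rfl⟩ := Finset.card_eq_two.mp hd2
  have hx : x ∈ C.t₁ := hd (Finset.mem_insert_self _ _)
  have hy : y ∈ C.t₁ := hd (Finset.mem_insert_of_mem (Finset.mem_singleton_self _))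
  rw [C.ht1_eq] at hx hy
  unfold uvS at hx hy ⊢
  simp only [Finset.mem_insert, Finset.mem_singleton] at hx hy
  rcases hx with rfl | rfl | rfl <;> rcases hy with rfl | rfl | rfl <;>
    first
      | exact absurd rfl hxy
      | (left; rfl)
      | (left; exact Finset.pair_comm _ _)
      | (right; left; rfl)
      | (right; left; exact Finset.pair_comm _ _)
      | (right; right; rfl)
      | (right; right; exact Finset.pair_comm _ _)

/-- The shapes of `e₁` and `e₁'`. -/
lemma edge_shape1 :
    (C.e₁ = {C.u, C.a} ∧ C.e₁' = {C.v, C.a}) ∨ (C.e₁ = {C.v, C.a} ∧ C.e₁' = {C.u, C.a}) := by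
  have h1 := (C.two_subset_t1 C.he1 C.he1c).resolve_left C.he1uv
  have h2 := (C.two_subset_t1 C.he1' C.he1'c).resolve_left C.he1'uv
  rcases h1 with h1 | h1 <;> rcases h2 with h2 | h2
  · exact absurd (h1.trans h2.symm) C.he11'
  · exact Or.inl ⟨h1, h2⟩
  · exact Or.inr ⟨h1, h2⟩
  · exact absurd (h1.trans h2.symm) C.he11'

lemma e1_union_e1' : C.e₁ ∪ C.e₁' = C.t₁ := by
  rcases C.edge_shape1 with ⟨h1, h2⟩ | ⟨h1, h2⟩ <;>
  · rw [h1, h2, C.ht1_eq]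
    unfold uvS
    ext x
    simp only [Finset.mem_union, Finset.mem_insert, Finset.mem_singleton]
    tauto

/-- If `{u,x}` and `{v,x}` are both edges of `K`, then `x = a` or `x = b`. -/
lemma link_lemma {x : V} (hxu : x ≠ C.u) (hxv : x ≠ C.v)
    (h1 : ({C.u, x} : Finset V) ∈ C.K) (h2 : ({C.v, x} : Finset V) ∈ C.K) :
    x = C.a ∨ x = C.b := by
  have hxK : ({x} : Finset V) ∈ C.K :=
    C.down h1 (Finset.singleton_subset_iff.mpr (Finset.mem_insert_of_mem (Finset.mem_singleton_self _))) ⟨x, Finset.mem_singleton_self x⟩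
  have hmu : ({x} : Finset V) ∈ lk C.K {C.u} := by
    rw [lk, Finset.mem_filter]
    refine ⟨hxK, ?_, ?_⟩
    · ext y
      simp only [Finset.mem_inter, Finset.mem_singleton, Finset.notMem_empty, iff_false, not_and]
      rintro rfl rfl
      exact hxu rfl
    · have : ({x} : Finset V) ∪ {C.u} = {C.u, x} := by
        ext y
        simp only [Finset.mem_union, Finset.mem_insert, Finset.mem_singleton]
        tauto
      rw [this]; exact h1
  have hmv : ({x} : Finset V) ∈ lk C.K {C.v} := by
    rw [lk, Finset.mem_filter]
    refine ⟨hxK, ?_, ?_⟩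
    · ext y
      simp only [Finset.mem_inter, Finset.mem_singleton, Finset.notMem_empty, iff_false, not_and]
      rintro rfl rfl
      exact hxv rfl
    · have : ({x} : Finset V) ∪ {C.v} = {C.v, x} := by
        ext y
        simp only [Finset.mem_union, Finset.mem_insert, Finset.mem_singleton]
        tauto
      rw [this]; exact h2
  have hm : ({x} : Finset V) ∈ lk C.K C.uvS := by
    have hl : lk C.K ({C.u, C.v} : Finset V) = lk C.K {C.u} ∩ lk C.K {C.v} := C.hlink
    rw [C.uvS_def, hl]
    exact Finset.mem_inter.mpr ⟨hmu, hmv⟩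
  rw [lk, Finset.mem_filter] at hm
  have huvx : insert x C.uvS ∈ C.K := by
    rw [Finset.insert_eq]; exact hm.2.2
  have hxuv : x ∉ C.uvS := by
    unfold uvS
    simp only [Finset.mem_insert, Finset.mem_singleton]
    tauto
  have hcard : (insert x C.uvS).card = 3 := by
    rw [Finset.card_insert_of_notMem hxuv, C.uvS_card]
  have hsub : C.uvS ⊆ insert x C.uvS := Finset.subset_insert _ _
  rcases C.honly _ huvx hcard hsub with h | h
  · left
    have : x ∈ C.t₁ := by rw [← h]; exact Finset.mem_insert_self _ _
    rw [C.ht1_eq] at this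
    rcases Finset.mem_insert.mp this with h' | h'
    · exact h'
    · exact absurd h' hxuv
  · right
    have : x ∈ C.t₂ := by rw [← h]; exact Finset.mem_insert_self _ _
    rw [C.ht2_eq] at this
    rcases Finset.mem_insert.mp this with h' | h'
    · exact h'
    · exact absurd h' hxuv

end Ctx

/-! #### Lemmas about the contraction map -/

section XiLemmas

variable {V : Type*} [DecidableEq V] {u v : V}

lemma cmap_v : cmap u v v = u := if_pos rfl

lemma cmap_of_ne {x : V} (h : x ≠ v) : cmap u v x = x := if_neg h

lemma mem_xi {x : V} {σ : Finset V} :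
    x ∈ xi u v σ ↔ (x ∈ σ ∧ x ≠ v) ∨ (x = u ∧ v ∈ σ) := by
  constructor
  · intro hx
    obtain ⟨y, hy, hyx⟩ := Finset.mem_image.mp hx
    by_cases hyv : y = v
    · subst hyv
      right
      rw [cmap_v] at hyx
      exact ⟨hyx.symm, hy⟩
    · rw [cmap_of_ne hyv] at hyx
      subst hyx
      exact Or.inl ⟨hy, hyv⟩
  · rintro (⟨hx, hxv⟩ | ⟨rfl, hv⟩)
    · exact Finset.mem_image.mpr ⟨x, hx, cmap_of_ne hxv⟩
    · exact Finset.mem_image.mpr ⟨v, hv, cmap_v⟩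

lemma xi_of_not_mem {σ : Finset V} (h : v ∉ σ) : xi u v σ = σ := by
  ext x
  rw [mem_xi]
  constructor
  · rintro (⟨hx, _⟩ | ⟨rfl, hv⟩)
    · exact hx
    · exact absurd hv h
  · intro hx
    exact Or.inl ⟨hx, fun he => h (he ▸ hx)⟩

lemma v_not_mem_xi (hne : u ≠ v) {σ : Finset V} : v ∉ xi u v σ := by
  rw [mem_xi]
  rintro (⟨_, hvv⟩ | ⟨hvu, _⟩)
  · exact hvv rfl
  · exact hne hvu.symm

lemma xi_subset {σ τ : Finset V} (h : σ ⊆ τ) : xi u v σ ⊆ xi u v τ :=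
  Finset.image_subset_image h

lemma xi_card {σ : Finset V} (h : ¬ (u ∈ σ ∧ v ∈ σ)) : (xi u v σ).card = σ.card := by
  apply Finset.card_image_of_injOn
  intro x hx y hy hxy
  by_cases hxv : x = v <;> by_cases hyv : y = v
  · rw [hxv, hyv]
  · rw [hxv] at hxy ⊢
    rw [cmap_v, cmap_of_ne hyv] at hxy
    exact absurd ⟨hxy ▸ hy, hxv ▸ hx⟩ h
  · rw [hyv] at hxy ⊢
    rw [cmap_v, cmap_of_ne hxv] at hxy
    exact absurd ⟨hxy.symm ▸ hx, hyv ▸ hy⟩ h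
  · rwa [cmap_of_ne hxv, cmap_of_ne hyv] at hxy

lemma xi_card_le {σ : Finset V} : (xi u v σ).card ≤ σ.card := Finset.card_image_le

lemma xi_pair_v (hne : u ≠ v) {x : V} (hxv : x ≠ v) :
    xi u v {v, x} = {u, x} := by
  unfold xi
  rw [Finset.image_insert, Finset.image_singleton, cmap_v, cmap_of_ne hxv]

lemma xi_uv_eq (hne : u ≠ v) : xi u v {u, v} = {u} := by
  unfold xi
  rw [Finset.image_insert, Finset.image_singleton, cmap_v, cmap_of_ne hne]
  simp

end XiLemmas

namespace Ctx

variable {V : Type*} [Fintype V] [DecidableEq V] (C : Ctx V)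

lemma xi_e1 : xi C.u C.v C.e₁ = {C.u, C.a} := by
  rcases C.edge_shape1 with ⟨h1, _⟩ | ⟨h1, _⟩
  · rw [h1]
    apply xi_of_not_mem
    simp only [Finset.mem_insert, Finset.mem_singleton]
    push_neg
    exact ⟨C.hne.symm, fun h => C.ha_ne_v h.symm⟩
  · rw [h1, xi_pair_v C.hne (fun h => C.ha_ne_v h)]

lemma xi_e1' : xi C.u C.v C.e₁' = {C.u, C.a} := by
  rcases C.edge_shape1 with ⟨_, h1⟩ | ⟨_, h1⟩
  · rw [h1, xi_pair_v C.hne (fun h => C.ha_ne_v h)]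
  · rw [h1]
    apply xi_of_not_mem
    simp only [Finset.mem_insert, Finset.mem_singleton]
    push_neg
    exact ⟨C.hne.symm, fun h => C.ha_ne_v h.symm⟩

lemma xi_t1 : xi C.u C.v C.t₁ = {C.u, C.a} := by
  rw [C.ht1_eq]
  show xi C.u C.v (insert C.a {C.u, C.v}) = _
  unfold xi
  rw [Finset.image_insert, cmap_of_ne C.ha_ne_v,
    show Finset.image (cmap C.u C.v) {C.u, C.v} = xi C.u C.v {C.u, C.v} from rfl,
    xi_uv_eq C.hne, Finset.pair_comm]

lemma xi_e2 : xi C.u C.v C.e₂ = {C.u, C.b} := C.swap.xi_e1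
lemma xi_e2' : xi C.u C.v C.e₂' = {C.u, C.b} := C.swap.xi_e1'
lemma xi_t2 : xi C.u C.v C.t₂ = {C.u, C.b} := C.swap.xi_t1

/-! #### Preimage classification -/

/-- Core consequence of the link condition: `u`- and `v`-cones over a common simplex
force a common coface. -/
lemma link_core {w : Finset V} (hw : w ∈ C.K) (hwu : C.u ∉ w) (hwv : C.v ∉ w)
    (h1 : insert C.u w ∈ C.K) (h2 : insert C.v w ∈ C.K) : w ∪ C.uvS ∈ C.K := by
  have hmu : w ∈ lk C.K {C.u} := by
    rw [lk, Finset.mem_filter]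
    refine ⟨hw, ?_, ?_⟩
    · ext y
      simp only [Finset.mem_inter, Finset.mem_singleton, Finset.notMem_empty, iff_false, not_and]
      rintro hy rfl
      exact hwu hy
    · rw [Finset.union_comm, ← Finset.insert_eq]
      exact h1
  have hmv : w ∈ lk C.K {C.v} := by
    rw [lk, Finset.mem_filter]
    refine ⟨hw, ?_, ?_⟩
    · ext y
      simp only [Finset.mem_inter, Finset.mem_singleton, Finset.notMem_empty, iff_false, not_and]
      rintro hy rfl
      exact hwv hy
    · rw [Finset.union_comm, ← Finset.insert_eq]
      exact h2
  have hm : w ∈ lk C.K C.uvS := by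
    have hl : lk C.K ({C.u, C.v} : Finset V) = lk C.K {C.u} ∩ lk C.K {C.v} := C.hlink
    rw [C.uvS_def, hl]
    exact Finset.mem_inter.mpr ⟨hmu, hmv⟩
  rw [lk, Finset.mem_filter] at hm
  exact hm.2.2

/-- Two distinct triangles with the same contraction image are impossible. -/
lemma no_swap_tri {w : Finset V} (hw : w ∈ C.K) (hwc : w.card = 2)
    (hwu : C.u ∉ w) (hwv : C.v ∉ w)
    (h1 : insert C.u w ∈ C.K) (h2 : insert C.v w ∈ C.K) : False := by
  have h4 := C.link_core hw hwu hwv h1 h2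
  have hcard : (w ∪ C.uvS).card = 4 := by
    rw [Finset.card_union_of_disjoint, hwc, C.uvS_card]
    rw [Finset.disjoint_left]
    intro x hx
    rw [C.uvS_def]
    simp only [Finset.mem_insert, Finset.mem_singleton]
    rintro (rfl | rfl)
    · exact hwu hx
    · exact hwv hx
  have := C.hman.1 _ h4
  omega

lemma triple_eq_insert {z : V} : ({C.u, C.v, z} : Finset V) = insert z C.uvS := by
  rw [C.uvS_def]
  ext y
  simp only [Finset.mem_insert, Finset.mem_singleton]
  tauto

/-- A triangle of the form `{u,v,z}` in `K` forces `z = a` or `z = b`. -/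
lemma tripleK {z : V} (hzu : z ≠ C.u) (hzv : z ≠ C.v)
    (h : ({C.u, C.v, z} : Finset V) ∈ C.K) : z = C.a ∨ z = C.b := by
  have hzuv : z ∉ C.uvS := by
    rw [C.uvS_def]
    simp only [Finset.mem_insert, Finset.mem_singleton]
    tauto
  have hcard : ({C.u, C.v, z} : Finset V).card = 3 := by
    rw [C.triple_eq_insert, Finset.card_insert_of_notMem hzuv, C.uvS_card]
  have hsub : C.uvS ⊆ {C.u, C.v, z} := by rw [C.triple_eq_insert]; exact Finset.subset_insert _ _
  rcases C.honly _ h hcard hsub with h' | h'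
  · left
    have : z ∈ C.t₁ := by rw [← h']; simp
    rw [C.ht1_eq] at this
    rcases Finset.mem_insert.mp this with h'' | h''
    · exact h''
    · exact absurd h'' hzuv
  · right
    have : z ∈ C.t₂ := by rw [← h']; simp
    rw [C.ht2_eq] at this
    rcases Finset.mem_insert.mp this with h'' | h''
    · exact h''
    · exact absurd h'' hzuv

/-- Shapes of preimages of an edge `{u,z}` under the contraction. -/
lemma pre_shape {z : V} (hzu : z ≠ C.u) (hzv : z ≠ C.v) {ρ : Finset V}
    (h : xi C.u C.v ρ = {C.u, z}) :
    ρ = {C.u, z} ∨ ρ = {C.v, z} ∨ ρ = {C.u, C.v, z} := by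
  have hz : z ∈ ρ := by
    have : z ∈ xi C.u C.v ρ := by rw [h]; simp
    rcases mem_xi.mp this with ⟨hz, _⟩ | ⟨hzu', _⟩
    · exact hz
    · exact absurd hzu' hzu
  have hu : C.u ∈ ρ ∨ C.v ∈ ρ := by
    have : C.u ∈ xi C.u C.v ρ := by rw [h]; simp
    rcases mem_xi.mp this with ⟨hu, _⟩ | ⟨_, hv⟩
    · exact Or.inl hu
    · exact Or.inr hv
  have hsub : ρ ⊆ {C.u, C.v, z} := by
    intro x hx
    simp only [Finset.mem_insert, Finset.mem_singleton]
    by_cases hxv : x = C.v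
    · tauto
    · have : x ∈ xi C.u C.v ρ := mem_xi.mpr (Or.inl ⟨hx, hxv⟩)
      rw [h] at this
      rcases Finset.mem_insert.mp this with h' | h'
      · tauto
      · rw [Finset.mem_singleton] at h'
        tauto
  by_cases huρ : C.u ∈ ρ <;> by_cases hvρ : C.v ∈ ρ
  · right; right
    apply Finset.Subset.antisymm hsub
    intro x hx
    simp only [Finset.mem_insert, Finset.mem_singleton] at hx
    rcases hx with rfl | rfl | rfl <;> assumption
  · left
    apply Finset.Subset.antisymm
    · intro x hx
      have := hsub hx
      simp only [Finset.mem_insert, Finset.mem_singleton] at this ⊢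
      rcases this with rfl | rfl | rfl
      · tauto
      · exact absurd hx hvρ
      · tauto
    · intro x hx
      simp only [Finset.mem_insert, Finset.mem_singleton] at hx
      rcases hx with rfl | rfl <;> assumption
  · right; left
    apply Finset.Subset.antisymm
    · intro x hx
      have := hsub hx
      simp only [Finset.mem_insert, Finset.mem_singleton] at this ⊢
      rcases this with rfl | rfl | rfl
      · exact absurd hx huρ
      · tauto
      · tauto
    · intro x hx
      simp only [Finset.mem_insert, Finset.mem_singleton] at hx
      rcases hx with rfl | rfl <;> assumption
  · tauto

/-- Preimages in `K` of the edge `{u,a}` are `e₁`, `e₁'` or `t₁`. -/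
lemma pre_ua {ρ : Finset V} (hρ : ρ ∈ C.K) (h : xi C.u C.v ρ = {C.u, C.a}) :
    ρ = C.e₁ ∨ ρ = C.e₁' ∨ ρ = C.t₁ := by
  rcases C.pre_shape C.ha_ne_u C.ha_ne_v h with h' | h' | h'
  · rcases C.edge_shape1 with ⟨h1, _⟩ | ⟨_, h2⟩
    · exact Or.inl (h'.trans h1.symm)
    · exact Or.inr (Or.inl (h'.trans h2.symm))
  · rcases C.edge_shape1 with ⟨_, h2⟩ | ⟨h1, _⟩
    · exact Or.inr (Or.inl (h'.trans h2.symm))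
    · exact Or.inl (h'.trans h1.symm)
  · right; right
    rw [h', C.triple_eq_insert, ← C.ht1_eq]

/-- For `z ∉ {u,v,a,b}`, the edges `{u,z}` and `{v,z}` cannot both lie in `K`. -/
lemma not_both_z {z : V} (hzu : z ≠ C.u) (hzv : z ≠ C.v) (hza : z ≠ C.a) (hzb : z ≠ C.b)
    (h1 : ({C.u, z} : Finset V) ∈ C.K) (h2 : ({C.v, z} : Finset V) ∈ C.K) : False := by
  rcases C.link_lemma hzu hzv h1 h2 with h | h
  · exact hza h
  · exact hzb h

/-- For `z ∉ {u,v,a,b}`, any preimage in `K` of `{u,z}` is `{u,z}` or `{v,z}`. -/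
lemma pre_z {z : V} (hzu : z ≠ C.u) (hzv : z ≠ C.v) (hza : z ≠ C.a) (hzb : z ≠ C.b)
    {ρ : Finset V} (hρ : ρ ∈ C.K) (h : xi C.u C.v ρ = {C.u, z}) :
    ρ = {C.u, z} ∨ ρ = {C.v, z} := by
  rcases C.pre_shape hzu hzv h with h' | h' | h'
  · exact Or.inl h'
  · exact Or.inr h'
  · exfalso
    rcases C.tripleK hzu hzv (h' ▸ hρ) with h'' | h''
    · exact hza h''
    · exact hzb h''

/-- Decomposition of an edge different from `{u,v}`. -/
lemma edge_form {d : Finset V} (hd2 : d.card = 2) (hduv : d ≠ C.uvS) :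
    (∃ z, z ≠ C.u ∧ z ≠ C.v ∧ (d = {C.u, z} ∨ d = {C.v, z})) ∨ (C.u ∉ d ∧ C.v ∉ d) := by
  by_cases hu : C.u ∈ d <;> by_cases hv : C.v ∈ d
  · exfalso
    apply hduv
    refine (Finset.eq_of_subset_of_card_le ?_ (by rw [hd2, C.uvS_card])).symm
    intro x hx
    rw [C.uvS_def] at hx
    rcases Finset.mem_insert.mp hx with rfl | hx
    · exact hu
    · rw [Finset.mem_singleton] at hx
      subst hx
      exact hv
  · left
    obtain ⟨x, y, hxy, rfl⟩ := Finset.card_eq_two.mp hd2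
    simp only [Finset.mem_insert, Finset.mem_singleton] at hu hv
    push_neg at hv
    rcases hu with rfl | rfl
    · exact ⟨y, fun hh => hxy hh.symm, hv.2.symm, Or.inl rfl⟩
    · exact ⟨x, hxy, hv.1.symm, Or.inl (Finset.pair_comm _ _)⟩
  · left
    obtain ⟨x, y, hxy, rfl⟩ := Finset.card_eq_two.mp hd2
    simp only [Finset.mem_insert, Finset.mem_singleton] at hu hv
    push_neg at hu
    rcases hv with rfl | rfl
    · exact ⟨y, hu.2.symm, fun hh => hxy hh.symm, Or.inr rfl⟩
    · exact ⟨x, hu.1.symm, hxy, Or.inr (Finset.pair_comm _ _)⟩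
  · exact Or.inr ⟨hu, hv⟩

/-! #### `MinPre` computations -/

lemma he1_ssub_t1 : C.e₁ ⊂ C.t₁ :=
  lt_of_le_of_ne C.he1 (fun h => by have := C.he1c; rw [h, C.ht1c] at this; omega)

lemma he1'_ssub_t1 : C.e₁' ⊂ C.t₁ :=
  lt_of_le_of_ne C.he1' (fun h => by have := C.he1'c; rw [h, C.ht1c] at this; omega)

lemma prec_e1_t1 : C.prec C.e₁ C.t₁ := C.prec_of_ssubset C.he1K C.ht1 C.he1_ssub_t1

/-- The minimal preimage of the contraction of a surviving edge is that edge itself. -/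
lemma minpre_edge {d : Finset V} (hd : d ∈ C.K) (hd2 : d.card = 2) (hduv : d ≠ C.uvS)
    (hd1 : d ≠ C.e₁') (hd2' : d ≠ C.e₂') :
    MinPre C.K C.u C.v C.prec (xi C.u C.v d) d := by
  refine ⟨hd, rfl, ?_⟩
  intro ρ hρ hξ
  rcases C.edge_form hd2 hduv with ⟨z, hzu, hzv, hform⟩ | ⟨hu, hv⟩
  · -- d = {u,z} or {v,z}; in both cases xi d = {u,z}
    have hxid : xi C.u C.v d = {C.u, z} := by
      rcases hform with rfl | rfl
      · apply xi_of_not_mem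
        simp only [Finset.mem_insert, Finset.mem_singleton]
        push_neg
        exact ⟨C.hne.symm, fun h => hzv h.symm⟩
      · exact xi_pair_v C.hne (fun h => hzv h)
    rw [hxid] at hξ
    by_cases hza : z = C.a
    · subst hza
      -- d must be e₁
      have hde1 : d = C.e₁ := by
        rcases C.edge_shape1 with ⟨h1, h2⟩ | ⟨h1, h2⟩ <;> rcases hform with rfl | rfl
        · exact h1.symm
        · exact absurd h2 (fun hh => hd1 hh.symm)
        · exact absurd h2 (fun hh => hd1 hh.symm)
        · exact h1.symm
      subst hde1
      rcases C.pre_ua hρ hξ with rfl | rfl | rfl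
      · exact Or.inl rfl
      · exact Or.inr C.hp1
      · exact Or.inr C.prec_e1_t1
    · by_cases hzb : z = C.b
      · subst hzb
        have hde2 : d = C.e₂ := by
          rcases C.swap.edge_shape1 with ⟨h1, h2⟩ | ⟨h1, h2⟩ <;> rcases hform with rfl | rfl
          · exact h1.symm
          · exact absurd h2 (fun hh => hd2' hh.symm)
          · exact absurd h2 (fun hh => hd2' hh.symm)
          · exact h1.symm
        subst hde2
        rcases C.swap.pre_ua hρ hξ with rfl | rfl | rfl
        · exact Or.inl rfl
        · exact Or.inr C.hp2
        · exact Or.inr C.swap.prec_e1_t1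
      · -- generic z : unique preimage
        left
        rcases C.pre_z hzu hzv hza hzb hρ hξ with h' | h' <;> rcases hform with rfl | rfl
        · exact h'
        · exact absurd (C.not_both_z hzu hzv hza hzb (h' ▸ hρ) hd) id
        · exact absurd (C.not_both_z hzu hzv hza hzb hd (h' ▸ hρ)) id
        · exact h'
  · -- u ∉ d, v ∉ d : xi d = d and unique preimage
    have hxid : xi C.u C.v d = d := xi_of_not_mem hv
    rw [hxid] at hξ
    left
    by_cases hvρ : C.v ∈ ρ
    · exfalso
      have : C.u ∈ xi C.u C.v ρ := mem_xi.mpr (Or.inr ⟨rfl, hvρ⟩)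
      rw [hξ] at this
      exact hu this
    · rw [xi_of_not_mem hvρ] at hξ
      exact hξ

/-- Elements of a contraction image fit inside `insert u (σ.erase v)`. -/
lemma xi_subset_insert {σ : Finset V} : xi C.u C.v σ ⊆ insert C.u (σ.erase C.v) := by
  intro x hx
  rcases mem_xi.mp hx with ⟨hx', hxv⟩ | ⟨rfl, _⟩
  · exact Finset.mem_insert_of_mem (Finset.mem_erase.mpr ⟨hxv, hx'⟩)
  · exact Finset.mem_insert_self _ _

lemma xi_of_mem_v {σ : Finset V} (hu : C.u ∉ σ) (hv : C.v ∈ σ) :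
    xi C.u C.v σ = insert C.u (σ.erase C.v) := by
  apply Finset.Subset.antisymm C.xi_subset_insert
  intro x hx
  rcases Finset.mem_insert.mp hx with rfl | hx
  · exact mem_xi.mpr (Or.inr ⟨rfl, hv⟩)
  · rw [Finset.mem_erase] at hx
    exact mem_xi.mpr (Or.inl ⟨hx.2, hx.1⟩)

/-- The minimal preimage of the contraction of a surviving triangle is that triangle. -/
lemma minpre_tri {τ : Finset V} (hτ : τ ∈ C.K) (hc : τ.card = 3)
    (h1 : τ ≠ C.t₁) (h2 : τ ≠ C.t₂) :
    MinPre C.K C.u C.v C.prec (xi C.u C.v τ) τ := by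
  have hnb : ¬ (C.u ∈ τ ∧ C.v ∈ τ) := by
    rintro ⟨hu, hv⟩
    have hsub : C.uvS ⊆ τ := by
      rw [C.uvS_def]
      intro x hx
      rcases Finset.mem_insert.mp hx with rfl | hx
      · exact hu
      · rw [Finset.mem_singleton] at hx
        subst hx
        exact hv
    rcases C.honly τ hτ hc hsub with h | h
    · exact h1 h
    · exact h2 h
  refine ⟨hτ, rfl, fun ρ hρ hξ => Or.inl ?_⟩
  -- cardinalities
  have hξc : (xi C.u C.v τ).card = 3 := by rw [xi_card hnb, hc]
  have hρ3 : ρ.card = 3 := by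
    have hle := C.hman.1 ρ hρ
    have : (xi C.u C.v ρ).card ≤ ρ.card := xi_card_le
    rw [hξ, hξc] at this
    omega
  have hnbρ : ¬ (C.u ∈ ρ ∧ C.v ∈ ρ) := by
    rintro ⟨hu, hv⟩
    have hsub := C.xi_subset_insert (σ := ρ)
    have hcard : (insert C.u (ρ.erase C.v)).card = 2 := by
      rw [Finset.insert_eq_self.mpr (Finset.mem_erase.mpr ⟨C.hne, hu⟩),
        Finset.card_erase_of_mem hv, hρ3]
    have := Finset.card_le_card hsub
    rw [hξ, hξc, hcard] at this
    omega
  by_cases hvτ : C.v ∈ τ <;> by_cases hvρ : C.v ∈ ρ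
  · -- both contain v, neither contains u
    have huτ : C.u ∉ τ := fun h => hnb ⟨h, hvτ⟩
    have huρ : C.u ∉ ρ := fun h => hnbρ ⟨h, hvρ⟩
    rw [C.xi_of_mem_v huρ hvρ, C.xi_of_mem_v huτ hvτ] at hξ
    have herase : ρ.erase C.v = τ.erase C.v := by
      have h1' : C.u ∉ ρ.erase C.v := fun h => huρ (Finset.mem_of_mem_erase h)
      have h2' : C.u ∉ τ.erase C.v := fun h => huτ (Finset.mem_of_mem_erase h)
      have := congrArg (fun s => Finset.erase s C.u) hξ
      simpa [Finset.erase_insert h1', Finset.erase_insert h2'] using this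
    calc ρ = insert C.v (ρ.erase C.v) := (Finset.insert_erase hvρ).symm
      _ = insert C.v (τ.erase C.v) := by rw [herase]
      _ = τ := Finset.insert_erase hvτ
  · -- v ∈ τ, v ∉ ρ : contradiction with the link condition
    exfalso
    have huτ : C.u ∉ τ := fun h => hnb ⟨h, hvτ⟩
    rw [xi_of_not_mem hvρ] at hξ
    set w := τ.erase C.v with hw
    have hwK : w ∈ C.K := by
      apply C.down hτ (Finset.erase_subset _ _)
      rw [← Finset.card_pos, Finset.card_erase_of_mem hvτ, hc]
      norm_num
    have hwc : w.card = 2 := by rw [hw, Finset.card_erase_of_mem hvτ, hc]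
    have hwu : C.u ∉ w := fun h => huτ (Finset.mem_of_mem_erase h)
    have hwv : C.v ∉ w := Finset.notMem_erase _ _
    apply C.no_swap_tri hwK hwc hwu hwv
    · rw [← C.xi_of_mem_v huτ hvτ, ← hξ]
      exact hρ
    · rw [Finset.insert_erase hvτ]
      exact hτ
  · -- v ∉ τ, v ∈ ρ : contradiction with the link condition
    exfalso
    have huρ : C.u ∉ ρ := fun h => hnbρ ⟨h, hvρ⟩
    rw [xi_of_not_mem hvτ] at hξ
    set w := ρ.erase C.v with hw
    have hwK : w ∈ C.K := by
      apply C.down hρ (Finset.erase_subset _ _)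
      rw [← Finset.card_pos, Finset.card_erase_of_mem hvρ, hρ3]
      norm_num
    have hwc : w.card = 2 := by rw [hw, Finset.card_erase_of_mem hvρ, hρ3]
    have hwu : C.u ∉ w := fun h => huρ (Finset.mem_of_mem_erase h)
    have hwv : C.v ∉ w := Finset.notMem_erase _ _
    apply C.no_swap_tri hwK hwc hwu hwv
    · rw [← C.xi_of_mem_v huρ hvρ, hξ]
      exact hτ
    · rw [Finset.insert_erase hvρ]
      exact hρ
  · -- v in neither
    rw [xi_of_not_mem hvρ, xi_of_not_mem hvτ] at hξ
    exact hξ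

lemma minpre_unique {σ' α β : Finset V} (h1 : MinPre C.K C.u C.v C.prec σ' α)
    (h2 : MinPre C.K C.u C.v C.prec σ' β) : α = β := by
  rcases h1.2.2 β h2.1 h2.2.1 with h | h
  · exact h.symm
  · rcases h2.2.2 α h1.1 h1.2.1 with h' | h'
    · exact h'
    · exact absurd h' (C.prec_asymm h)

lemma precInd_iff {σ' τ' σ τ : Finset V} (hσ : MinPre C.K C.u C.v C.prec σ' σ)
    (hτ : MinPre C.K C.u C.v C.prec τ' τ) :
    precInd C.K C.u C.v C.prec σ' τ' ↔ C.prec σ τ := by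
  constructor
  · rintro ⟨σ₀, τ₀, h1, h2, hp⟩
    rwa [C.minpre_unique h1 hσ, C.minpre_unique h2 hτ] at hp
  · intro hp
    exact ⟨σ, τ, hσ, hτ, hp⟩

/-! #### Existence and classification of minimal preimages -/

lemma exists_prec_min : ∀ (S : Finset (Finset V)), S.Nonempty → (∀ x ∈ S, x ∈ C.K) →
    ∃ m ∈ S, ∀ x ∈ S, x = m ∨ C.prec m x := by
  intro S
  induction S using Finset.induction_on with
  | empty => intro hS _; exact absurd hS (by simp)
  | @insert a S' ha ih =>
    intro _ hsub
    by_cases hS' : S'.Nonempty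
    · obtain ⟨m, hm, hmin⟩ := ih hS' (fun x hx => hsub x (Finset.mem_insert_of_mem hx))
      by_cases ham : a = m
      · refine ⟨m, Finset.mem_insert_of_mem hm, ?_⟩
        intro x hx
        rcases Finset.mem_insert.mp hx with rfl | hx
        · exact Or.inl ham
        · exact hmin x hx
      · have haK : a ∈ C.K := hsub a (Finset.mem_insert_self _ _)
        have hmK : m ∈ C.K := hsub m (Finset.mem_insert_of_mem hm)
        rcases C.prec_total haK hmK ham with hp | hp
        · refine ⟨a, Finset.mem_insert_self _ _, ?_⟩
          intro x hx
          rcases Finset.mem_insert.mp hx with rfl | hx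
          · exact Or.inl rfl
          · rcases hmin x hx with rfl | hx'
            · exact Or.inr hp
            · exact Or.inr (C.prec_trans hp hx')
        · refine ⟨m, Finset.mem_insert_of_mem hm, ?_⟩
          intro x hx
          rcases Finset.mem_insert.mp hx with rfl | hx
          · exact Or.inr hp
          · exact hmin x hx
    · refine ⟨a, Finset.mem_insert_self _ _, ?_⟩
      intro x hx
      rcases Finset.mem_insert.mp hx with rfl | hx
      · exact Or.inl rfl
      · exact absurd ⟨x, hx⟩ hS'

lemma minpre_exists {σ' : Finset V} (h : σ' ∈ C.K.image (xi C.u C.v)) :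
    ∃ σ, MinPre C.K C.u C.v C.prec σ' σ := by
  obtain ⟨σ₀, hσ₀, hξ⟩ := Finset.mem_image.mp h
  have hne : (C.K.filter (fun ρ => xi C.u C.v ρ = σ')).Nonempty :=
    ⟨σ₀, Finset.mem_filter.mpr ⟨hσ₀, hξ⟩⟩
  obtain ⟨m, hm, hmin⟩ := C.exists_prec_min _ hne (fun x hx => (Finset.mem_filter.mp hx).1)
  rw [Finset.mem_filter] at hm
  exact ⟨m, hm.1, hm.2, fun ρ hρ hξρ => hmin ρ (Finset.mem_filter.mpr ⟨hρ, hξρ⟩)⟩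

lemma prec_e1'_t1 : C.prec C.e₁' C.t₁ := C.prec_of_ssubset C.he1'K C.ht1 C.he1'_ssub_t1

/-- Classification of the minimal preimage of an edge of `K'`. -/
lemma minpre_edge_class {d' σ : Finset V} (hc : d'.card = 2)
    (hmp : MinPre C.K C.u C.v C.prec d' σ) :
    σ ∈ C.K ∧ σ.card = 2 ∧ σ ≠ C.uvS ∧ σ ≠ C.e₁' ∧ σ ≠ C.e₂' ∧ xi C.u C.v σ = d' := by
  obtain ⟨hσK, hξ, hmin⟩ := hmp
  have hcle : 2 ≤ σ.card := by
    have := xi_card_le (u := C.u) (v := C.v) (σ := σ)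
    rw [hξ, hc] at this
    omega
  have hc3 := C.hman.1 σ hσK
  -- rule out σ = t₁ and σ = t₂ and σ being a triangle through {u,v}
  have hne1 : σ ≠ C.t₁ := by
    rintro rfl
    have hpre : xi C.u C.v C.e₁ = d' := by rw [C.xi_e1, ← C.xi_t1, hξ]
    rcases hmin C.e₁ C.he1K hpre with h | h
    · have := C.he1c; rw [h, C.ht1c] at this; omega
    · exact C.prec_asymm C.prec_e1_t1 h
  have hne2 : σ ≠ C.t₂ := by
    rintro rfl
    have hpre : xi C.u C.v C.e₂ = d' := by rw [C.xi_e2, ← C.xi_t2, hξ]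
    rcases hmin C.e₂ C.he2K hpre with h | h
    · have := C.he2c; rw [h, C.ht2c] at this; omega
    · exact C.prec_asymm C.swap.prec_e1_t1 h
  have hσ2 : σ.card = 2 := by
    rcases Nat.lt_or_ge σ.card 3 with h | h
    · omega
    · exfalso
      have hσ3 : σ.card = 3 := by omega
      by_cases hb : C.u ∈ σ ∧ C.v ∈ σ
      · have hsub : C.uvS ⊆ σ := by
          rw [C.uvS_def]
          intro x hx
          rcases Finset.mem_insert.mp hx with rfl | hx
          · exact hb.1
          · rw [Finset.mem_singleton] at hx; subst hx; exact hb.2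
        rcases C.honly σ hσK hσ3 hsub with h' | h'
        · exact hne1 h'
        · exact hne2 h'
      · have := xi_card hb (u := C.u) (v := C.v)
        rw [hξ, hc, hσ3] at this
        omega
  have hnuv : σ ≠ C.uvS := by
    rintro rfl
    rw [show xi C.u C.v C.uvS = {C.u} from xi_uv_eq C.hne] at hξ
    rw [← hξ] at hc
    simp at hc
  have hne1' : σ ≠ C.e₁' := by
    rintro rfl
    have hpre : xi C.u C.v C.e₁ = d' := by rw [C.xi_e1, ← C.xi_e1', hξ]
    rcases hmin C.e₁ C.he1K hpre with h | h
    · exact C.he11' h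
    · exact C.prec_asymm C.hp1 h
  have hne2' : σ ≠ C.e₂' := by
    rintro rfl
    have hpre : xi C.u C.v C.e₂ = d' := by rw [C.xi_e2, ← C.xi_e2', hξ]
    rcases hmin C.e₂ C.he2K hpre with h | h
    · exact C.he22' h
    · exact C.prec_asymm C.hp2 h
  exact ⟨hσK, hσ2, hnuv, hne1', hne2', hξ⟩

/-- Classification of the minimal preimage of a triangle of `K'`. -/
lemma minpre_tri_class {s' σ : Finset V} (hc : s'.card = 3)
    (hmp : MinPre C.K C.u C.v C.prec s' σ) :
    σ ∈ C.K ∧ σ.card = 3 ∧ σ ≠ C.t₁ ∧ σ ≠ C.t₂ ∧ xi C.u C.v σ = s' := by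
  obtain ⟨hσK, hξ, _⟩ := hmp
  have hcle : 3 ≤ σ.card := by
    have := xi_card_le (u := C.u) (v := C.v) (σ := σ)
    rw [hξ, hc] at this
    omega
  have hc3 := C.hman.1 σ hσK
  have hσ3 : σ.card = 3 := by omega
  have hne1 : σ ≠ C.t₁ := by
    rintro rfl
    rw [C.xi_t1] at hξ
    rw [← hξ] at hc
    have : ({C.u, C.a} : Finset V).card ≤ 2 := Finset.card_insert_le _ _ |>.trans (by simp)
    omega
  have hne2 : σ ≠ C.t₂ := by
    rintro rfl
    rw [C.xi_t2] at hξ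
    rw [← hξ] at hc
    have : ({C.u, C.b} : Finset V).card ≤ 2 := Finset.card_insert_le _ _ |>.trans (by simp)
    omega
  exact ⟨hσK, hσ3, hne1, hne2, hξ⟩

/-! #### The vertex pairing of `{u,v}` and its order consequence -/

lemma not_reach_uv : ¬ (vertGraph C.K C.prec C.uvS).Reachable C.u C.v := by
  obtain ⟨x, y, wx, wy, heq, hxy, _, hnr, _⟩ := C.hpairuv
  have hx : C.u = x ∨ C.u = y := by
    have : C.u ∈ ({x, y} : Finset V) := by rw [← heq]; simp [uvS]
    simpa using this
  have hy : C.v = x ∨ C.v = y := by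
    have : C.v ∈ ({x, y} : Finset V) := by rw [← heq]; simp [uvS]
    simpa using this
  rcases hx with rfl | rfl
  · rcases hy with h | rfl
    · exact absurd h.symm C.hne
    · exact hnr
  · rcases hy with rfl | h
    · exact fun hh => hnr hh.symm
    · exact absurd h.symm C.hne

/-- Key consequence of the vertex pairing: `{u,v} ≺ e₁'`. -/
lemma uv_prec_e1' : C.prec C.uvS C.e₁' := by
  have hne' : C.uvS ≠ C.e₁' := Ne.symm C.he1'uv
  apply C.prec_of_not C.uvS_mem C.he1'K hne'
  intro hcon
  -- then both {u,a} and {v,a} precede {u,v}, giving a path u-a-v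
  have hpe1 : C.prec C.e₁ C.uvS := C.prec_trans C.hp1 hcon
  have hua : ({C.u, C.a} : Finset V) ∈ C.K ∧ C.prec {C.u, C.a} C.uvS := by
    rcases C.edge_shape1 with ⟨h1, _⟩ | ⟨_, h2⟩
    · exact ⟨h1 ▸ C.he1K, h1 ▸ hpe1⟩
    · exact ⟨h2 ▸ C.he1'K, h2 ▸ hcon⟩
  have hva : ({C.v, C.a} : Finset V) ∈ C.K ∧ C.prec {C.v, C.a} C.uvS := by
    rcases C.edge_shape1 with ⟨_, h2⟩ | ⟨h1, _⟩
    · exact ⟨h2 ▸ C.he1'K, h2 ▸ hcon⟩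
    · exact ⟨h1 ▸ C.he1K, h1 ▸ hpe1⟩
  have hadj1 : (vertGraph C.K C.prec C.uvS).Adj C.u C.a :=
    ⟨Ne.symm C.ha_ne_u, hua.1, hua.2⟩
  have hadj2 : (vertGraph C.K C.prec C.uvS).Adj C.a C.v := by
    refine ⟨C.ha_ne_v, ?_, ?_⟩
    · rw [Finset.pair_comm]; exact hva.1
    · rw [Finset.pair_comm]; exact hva.2
  exact C.not_reach_uv (hadj1.reachable.trans hadj2.reachable)

lemma uv_prec_e2' : C.prec C.uvS C.e₂' := C.swap.uv_prec_e1'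

/-! #### The second triangle `s₁'` at `e₁'` and the maximum `M₁` -/

lemma exists_other {d τ : Finset V} (hd : d ∈ C.K) (hd2 : d.card = 2)
    (hτ : τ ∈ C.K) (hτ3 : τ.card = 3) (hdτ : d ⊆ τ) :
    ∃ σ, σ ∈ C.K ∧ σ.card = 3 ∧ d ⊆ σ ∧ σ ≠ τ ∧
      ∀ ρ ∈ C.K, ρ.card = 3 → d ⊆ ρ → ρ = τ ∨ ρ = σ := by
  obtain ⟨s, hs, t, ht, hst, hs3, ht3, hds, hdt, huniq⟩ := C.hman.2.2 d hd hd2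
  rcases huniq τ hτ hτ3 hdτ with rfl | rfl
  · exact ⟨t, ht, ht3, hdt, hst.symm, fun ρ hρ h3 hdρ => huniq ρ hρ h3 hdρ⟩
  · refine ⟨s, hs, hs3, hds, hst, fun ρ hρ h3 hdρ => ?_⟩
    rcases huniq ρ hρ h3 hdρ with h | h
    · exact Or.inr h
    · exact Or.inl h

lemma sp1_ex : ∃ σ, σ ∈ C.K ∧ σ.card = 3 ∧ C.e₁' ⊆ σ ∧ σ ≠ C.t₁ ∧
    ∀ ρ ∈ C.K, ρ.card = 3 → C.e₁' ⊆ ρ → ρ = C.t₁ ∨ ρ = σ :=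
  C.exists_other C.he1'K C.he1'c C.ht1 C.ht1c C.he1'

/-- The second triangle containing `e₁'`. -/
def sp1 : Finset V := C.sp1_ex.choose

lemma sp1_mem : C.sp1 ∈ C.K := C.sp1_ex.choose_spec.1
lemma sp1_card : C.sp1.card = 3 := C.sp1_ex.choose_spec.2.1
lemma sp1_sub : C.e₁' ⊆ C.sp1 := C.sp1_ex.choose_spec.2.2.1
lemma sp1_ne_t1 : C.sp1 ≠ C.t₁ := C.sp1_ex.choose_spec.2.2.2.1
lemma sp1_uniq : ∀ ρ ∈ C.K, ρ.card = 3 → C.e₁' ⊆ ρ → ρ = C.t₁ ∨ ρ = C.sp1 :=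
  C.sp1_ex.choose_spec.2.2.2.2

lemma sp1_ne_t2 : C.sp1 ≠ C.t₂ := by
  rintro h
  exact C.he1'uv (C.inter_t1_t2 C.he1'c C.he1' (h ▸ C.sp1_sub))

/-- The second triangle containing `e₂'`. -/
def sp2 : Finset V := C.swap.sp1

lemma sp2_mem : C.sp2 ∈ C.K := C.swap.sp1_mem
lemma sp2_card : C.sp2.card = 3 := C.swap.sp1_card
lemma sp2_sub : C.e₂' ⊆ C.sp2 := C.swap.sp1_sub
lemma sp2_ne_t2 : C.sp2 ≠ C.t₂ := C.swap.sp1_ne_t1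
lemma sp2_ne_t1 : C.sp2 ≠ C.t₁ := C.swap.sp1_ne_t2
lemma sp2_uniq : ∀ ρ ∈ C.K, ρ.card = 3 → C.e₂' ⊆ ρ → ρ = C.t₂ ∨ ρ = C.sp2 :=
  C.swap.sp1_uniq

/-- From the pairing of `e₁'` with `t₁`: the component of `s₁'` above `e₁'` has a
maximum `M₁` succeeding `t₁`. -/
lemma exists_M1 : ∃ M, GreatestTri (triGraph C.K C.prec C.e₁') C.prec C.sp1 M ∧
    C.prec C.t₁ M := by
  obtain ⟨s, t, ws, wt, hst, hsK, htK, hs3, ht3, hes, het, _, _, hnr, gs, gt, hdisj⟩ := C.hpair1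
  have hscl : s = C.t₁ ∨ s = C.sp1 := C.sp1_uniq s hsK hs3 hes
  have htcl : t = C.t₁ ∨ t = C.sp1 := C.sp1_uniq t htK ht3 het
  rcases hscl with rfl | rfl
  · rcases htcl with h | rfl
    · exact absurd h.symm hst
    · rcases hdisj with ⟨hp, heq⟩ | ⟨hp, heq⟩
      · exact ⟨wt, gt, heq ▸ hp⟩
      · exfalso
        apply hnr
        have := gt.1
        rw [← heq] at this
        exact this.symm
  · rcases htcl with rfl | h
    · rcases hdisj with ⟨hp, heq⟩ | ⟨hp, heq⟩
      · exfalso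
        apply hnr
        have := gs.1
        rw [← heq] at this
        exact this
      · refine ⟨ws, gs, ?_⟩
        rw [heq]
        exact hp
    · exact absurd h hst.symm

lemma exists_M2 : ∃ M, GreatestTri (triGraph C.K C.prec C.e₂') C.prec C.sp2 M ∧
    C.prec C.t₂ M := C.swap.exists_M1

/-! #### Incidence in the contracted complex -/

lemma tri_nb {τ : Finset V} (hτ : τ ∈ C.K) (hc : τ.card = 3)
    (h1 : τ ≠ C.t₁) (h2 : τ ≠ C.t₂) : ¬ (C.u ∈ τ ∧ C.v ∈ τ) := by
  rintro ⟨hu, hv⟩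
  have hsub : C.uvS ⊆ τ := by
    rw [C.uvS_def]
    intro x hx
    rcases Finset.mem_insert.mp hx with rfl | hx
    · exact hu
    · rw [Finset.mem_singleton] at hx; subst hx; exact hv
  rcases C.honly τ hτ hc hsub with h | h
  · exact h1 h
  · exact h2 h

lemma edge_nb {d : Finset V} (hd2 : d.card = 2) (hduv : d ≠ C.uvS) :
    ¬ (C.u ∈ d ∧ C.v ∈ d) := by
  rintro ⟨hu, hv⟩
  apply hduv
  refine (Finset.eq_of_subset_of_card_le ?_ (by rw [hd2, C.uvS_card])).symm
  intro x hx
  rw [C.uvS_def] at hx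
  rcases Finset.mem_insert.mp hx with rfl | hx
  · exact hu
  · rw [Finset.mem_singleton] at hx; subst hx; exact hv

lemma mem_of_mem_xi_ne_u {τ : Finset V} {x : V} (hx : x ∈ xi C.u C.v τ) (hxu : x ≠ C.u) :
    x ∈ τ := by
  rcases mem_xi.mp hx with ⟨h, _⟩ | ⟨h, _⟩
  · exact h
  · exact absurd h hxu

/-- Incidence correspondence: when the image of a surviving edge is contained in the image
of a surviving triangle. -/
lemma incidence {d τ : Finset V} (hd : d ∈ C.K) (hd2 : d.card = 2) (hduv : d ≠ C.uvS)
    (hde1 : d ≠ C.e₁') (hde2 : d ≠ C.e₂') (hτ : τ ∈ C.K) (hτ3 : τ.card = 3)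
    (hτ1 : τ ≠ C.t₁) (hτ2 : τ ≠ C.t₂) (h : xi C.u C.v d ⊆ xi C.u C.v τ) :
    d ⊆ τ ∨ (d = C.e₁ ∧ C.e₁' ⊆ τ) ∨ (d = C.e₂ ∧ C.e₂' ⊆ τ) := by
  have hnbτ := C.tri_nb hτ hτ3 hτ1 hτ2
  rcases C.edge_form hd2 hduv with ⟨z, hzu, hzv, hform⟩ | ⟨hu, hv⟩
  · have hxid : xi C.u C.v d = {C.u, z} := by
      rcases hform with rfl | rfl
      · apply xi_of_not_mem
        simp only [Finset.mem_insert, Finset.mem_singleton]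
        push_neg
        exact ⟨C.hne.symm, fun hh => hzv hh.symm⟩
      · exact xi_pair_v C.hne hzv
    rw [hxid] at h
    have hzτ : z ∈ τ := C.mem_of_mem_xi_ne_u (h (by simp)) hzu
    have huor : C.u ∈ τ ∨ C.v ∈ τ := by
      have := h (Finset.mem_insert_self _ _)
      rcases mem_xi.mp this with ⟨h', _⟩ | ⟨_, h'⟩
      · exact Or.inl h'
      · exact Or.inr h'
    rcases hform with rfl | rfl
    · -- d = {u, z}
      rcases huor with huτ | hvτ
      · left
        intro x hx
        rcases Finset.mem_insert.mp hx with rfl | hx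
        · exact huτ
        · rw [Finset.mem_singleton] at hx; subst hx; exact hzτ
      · -- v ∈ τ (and u ∉ τ); so {v,z} ∈ K and z ∈ {a,b}
        have hvzK : ({C.v, z} : Finset V) ∈ C.K := by
          apply C.down hτ ?_ ⟨C.v, by simp⟩
          intro x hx
          rcases Finset.mem_insert.mp hx with rfl | hx
          · exact hvτ
          · rw [Finset.mem_singleton] at hx; subst hx; exact hzτ
        rcases C.link_lemma hzu hzv hd hvzK with rfl | rfl
        · -- z = a
          rcases C.edge_shape1 with ⟨h1, h2⟩ | ⟨h1, h2⟩
          · right; left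
            refine ⟨h1.symm, ?_⟩
            rw [h2]
            intro x hx
            rcases Finset.mem_insert.mp hx with rfl | hx
            · exact hvτ
            · rw [Finset.mem_singleton] at hx; subst hx; exact hzτ
          · exact absurd h2.symm hde1
        · -- z = b
          rcases C.swap.edge_shape1 with ⟨h1, h2⟩ | ⟨h1, h2⟩
          · right; right
            refine ⟨h1.symm, ?_⟩
            rw [show C.e₂' = {C.v, C.b} from h2]
            intro x hx
            rcases Finset.mem_insert.mp hx with rfl | hx
            · exact hvτ
            · rw [Finset.mem_singleton] at hx; subst hx; exact hzτ
          · exact absurd h2.symm hde2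
    · -- d = {v, z}
      rcases huor with huτ | hvτ
      · -- u ∈ τ; so {u,z} ∈ K and z ∈ {a,b}
        have huzK : ({C.u, z} : Finset V) ∈ C.K := by
          apply C.down hτ ?_ ⟨C.u, by simp⟩
          intro x hx
          rcases Finset.mem_insert.mp hx with rfl | hx
          · exact huτ
          · rw [Finset.mem_singleton] at hx; subst hx; exact hzτ
        rcases C.link_lemma hzu hzv huzK hd with rfl | rfl
        · rcases C.edge_shape1 with ⟨h1, h2⟩ | ⟨h1, h2⟩
          · exact absurd h2.symm hde1
          · right; left
            refine ⟨h1.symm, ?_⟩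
            rw [h2]
            intro x hx
            rcases Finset.mem_insert.mp hx with rfl | hx
            · exact huτ
            · rw [Finset.mem_singleton] at hx; subst hx; exact hzτ
        · rcases C.swap.edge_shape1 with ⟨h1, h2⟩ | ⟨h1, h2⟩
          · exact absurd h2.symm hde2
          · right; right
            refine ⟨h1.symm, ?_⟩
            rw [show C.e₂' = {C.u, C.b} from h2]
            intro x hx
            rcases Finset.mem_insert.mp hx with rfl | hx
            · exact huτ
            · rw [Finset.mem_singleton] at hx; subst hx; exact hzτ
      · left
        intro x hx
        rcases Finset.mem_insert.mp hx with rfl | hx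
        · exact hvτ
        · rw [Finset.mem_singleton] at hx; subst hx; exact hzτ
  · -- u,v ∉ d
    left
    have hxid : xi C.u C.v d = d := xi_of_not_mem hv
    rw [hxid] at h
    intro x hx
    have hxu : x ≠ C.u := fun hh => hu (hh ▸ hx)
    exact C.mem_of_mem_xi_ne_u (h hx) hxu

/-- Injectivity of the contraction on surviving triangles. -/
lemma tri_inj {σ τ : Finset V} (hσ : σ ∈ C.K) (hσ3 : σ.card = 3) (hσ1 : σ ≠ C.t₁)
    (hσ2 : σ ≠ C.t₂) (hτ : τ ∈ C.K) (hτ3 : τ.card = 3) (hτ1 : τ ≠ C.t₁) (hτ2 : τ ≠ C.t₂)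
    (h : xi C.u C.v σ = xi C.u C.v τ) : σ = τ :=
  C.minpre_unique (C.minpre_tri hσ hσ3 hσ1 hσ2) (h ▸ C.minpre_tri hτ hτ3 hτ1 hτ2)

/-! #### The dual graphs before and after contraction -/

/-- The dual graph of `K` at threshold `c`. -/
def Gc (c : Finset V) : SimpleGraph (Finset V) := triGraph C.K C.prec c

/-- The dual graph of `K'` at threshold `ξ c`. -/
def Gp (c : Finset V) : SimpleGraph (Finset V) :=
  triGraph (C.K.image (xi C.u C.v)) (precInd C.K C.u C.v C.prec) (xi C.u C.v c)

@[simp] lemma swap_Gc (c : Finset V) : C.swap.Gc c = C.Gc c := rfl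
@[simp] lemma swap_Gp (c : Finset V) : C.swap.Gp c = C.Gp c := rfl

lemma Gc_mono {c c' : Finset V} (h : C.prec c c') : C.Gc c' ≤ C.Gc c := by
  rintro s t ⟨h1, h2, h3, h4, h5, d, hd1, hd2, hd3, hd4, hd5⟩
  exact ⟨h1, h2, h3, h4, h5, d, hd1, hd2, hd3, hd4, C.prec_trans h hd5⟩

/-- `σ` is adjacent to `t₁` whenever it contains `e₁` or `e₁'`. -/
lemma adj_to_t1 {e σ : Finset V} (hpe1 : C.prec e C.e₁) (hσ : σ ∈ C.K) (hσ3 : σ.card = 3)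
    (hσ1 : σ ≠ C.t₁) (hP : C.e₁ ⊆ σ ∨ C.e₁' ⊆ σ) : (C.Gc e).Adj σ C.t₁ := by
  refine ⟨hσ1, hσ, C.ht1, hσ3, C.ht1c, ?_⟩
  rcases hP with hP | hP
  · exact ⟨C.e₁, C.he1K, C.he1c, hP, C.he1, hpe1⟩
  · exact ⟨C.e₁', C.he1'K, C.he1'c, hP, C.he1', C.prec_trans hpe1 C.hp1⟩

/-- Forward transfer of an arc between surviving triangles. -/
lemma adj_fwd {e d σ τ : Finset V}
    (he : e ∈ C.K) (he2 : e.card = 2) (heuv : e ≠ C.uvS) (hee1 : e ≠ C.e₁') (hee2 : e ≠ C.e₂')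
    (hd : d ∈ C.K) (hd2 : d.card = 2) (hduv : d ≠ C.uvS) (hde1 : d ≠ C.e₁') (hde2 : d ≠ C.e₂')
    (hσ : σ ∈ C.K) (hσ3 : σ.card = 3) (hσ1 : σ ≠ C.t₁) (hσ2 : σ ≠ C.t₂)
    (hτ : τ ∈ C.K) (hτ3 : τ.card = 3) (hτ1 : τ ≠ C.t₁) (hτ2 : τ ≠ C.t₂)
    (hdσ : d ⊆ σ) (hdτ : d ⊆ τ) (hστ : σ ≠ τ) (hp : C.prec e d) :
    (C.Gp e).Adj (xi C.u C.v σ) (xi C.u C.v τ) := by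
  refine ⟨fun hh => hστ (C.tri_inj hσ hσ3 hσ1 hσ2 hτ hτ3 hτ1 hτ2 hh), 
    Finset.mem_image_of_mem _ hσ, Finset.mem_image_of_mem _ hτ, 
    by rw [xi_card (C.tri_nb hσ hσ3 hσ1 hσ2), hσ3], 
    by rw [xi_card (C.tri_nb hτ hτ3 hτ1 hτ2), hτ3], 
    xi C.u C.v d, Finset.mem_image_of_mem _ hd, 
    by rw [xi_card (C.edge_nb hd2 hduv), hd2], 
    xi_subset hdσ, xi_subset hdτ, ?_⟩
  rw [C.precInd_iff (C.minpre_edge he he2 heuv hee1 hee2) (C.minpre_edge hd hd2 hduv hde1 hde2)]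
  exact hp

/-- The merged arc: triangles containing `e₁` resp. `e₁'` become adjacent after
contraction, provided `e ≺ e₁`. -/
lemma adj_merged1 {e σ τ : Finset V}
    (he : e ∈ C.K) (he2 : e.card = 2) (heuv : e ≠ C.uvS) (hee1 : e ≠ C.e₁') (hee2 : e ≠ C.e₂')
    (hpe1 : C.prec e C.e₁)
    (hσ : σ ∈ C.K) (hσ3 : σ.card = 3) (hσ1 : σ ≠ C.t₁) (hσ2 : σ ≠ C.t₂)
    (hτ : τ ∈ C.K) (hτ3 : τ.card = 3) (hτ1 : τ ≠ C.t₁) (hτ2 : τ ≠ C.t₂)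
    (hdσ : C.e₁ ⊆ σ) (hdτ : C.e₁' ⊆ τ) :
    (C.Gp e).Adj (xi C.u C.v σ) (xi C.u C.v τ) := by
  have hστ : σ ≠ τ := by
    rintro rfl
    apply hσ1
    refine (Finset.eq_of_subset_of_card_le ?_ (by rw [C.ht1c, hσ3])).symm
    rw [← C.e1_union_e1']
    exact Finset.union_subset hdσ hdτ
  refine ⟨fun hh => hστ (C.tri_inj hσ hσ3 hσ1 hσ2 hτ hτ3 hτ1 hτ2 hh), 
    Finset.mem_image_of_mem _ hσ, Finset.mem_image_of_mem _ hτ, 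
    by rw [xi_card (C.tri_nb hσ hσ3 hσ1 hσ2), hσ3], 
    by rw [xi_card (C.tri_nb hτ hτ3 hτ1 hτ2), hτ3], 
    xi C.u C.v C.e₁, Finset.mem_image_of_mem _ C.he1K, 
    by rw [C.xi_e1]; exact Finset.card_pair (Ne.symm C.ha_ne_u), 
    xi_subset hdσ, by rw [C.xi_e1, ← C.xi_e1']; exact xi_subset hdτ, ?_⟩
  rw [C.precInd_iff (C.minpre_edge he he2 heuv hee1 hee2)
    (C.minpre_edge C.he1K C.he1c C.he1uv C.he11' C.he1_ne_e2')]
  exact hpe1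

/-- Backward transfer of an arc of the contracted dual graph. -/
lemma adj_back {e : Finset V}
    (he : e ∈ C.K) (he2 : e.card = 2) (heuv : e ≠ C.uvS) (hee1 : e ≠ C.e₁') (hee2 : e ≠ C.e₂')
    {s' m' : Finset V} (hadj : (C.Gp e).Adj s' m') {σ : Finset V}
    (hσ : σ ∈ C.K) (hσ3 : σ.card = 3) (hσ1 : σ ≠ C.t₁) (hσ2 : σ ≠ C.t₂)
    (hξσ : xi C.u C.v σ = s') :
    ∃ μ, μ ∈ C.K ∧ μ.card = 3 ∧ μ ≠ C.t₁ ∧ μ ≠ C.t₂ ∧ xi C.u C.v μ = m' ∧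
      (C.Gc e).Reachable σ μ := by
  obtain ⟨hne', hs'K, hm'K, hs'3, hm'3, d', hd'K, hd'2, hd's, hd'm, hpI⟩ := hadj
  obtain ⟨μ₀, hμ₀⟩ := C.minpre_exists hm'K
  obtain ⟨hμK, hμ3, hμ1, hμ2, hξμ⟩ := C.minpre_tri_class hm'3 hμ₀
  obtain ⟨δ, hδ₀⟩ := C.minpre_exists hd'K
  obtain ⟨hδK, hδ2, hδuv, hδe1, hδe2, hξδ⟩ := C.minpre_edge_class hd'2 hδ₀
  have hpeδ : C.prec e δ := by
    rwa [C.precInd_iff (C.minpre_edge he he2 heuv hee1 hee2) hδ₀] at hpI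
  have hIσ := C.incidence hδK hδ2 hδuv hδe1 hδe2 hσ hσ3 hσ1 hσ2 (by rw [hξδ, hξσ]; exact hd's)
  have hIμ := C.incidence hδK hδ2 hδuv hδe1 hδe2 hμK hμ3 hμ1 hμ2 (by rw [hξδ, hξμ]; exact hd'm)
  refine ⟨μ₀, hμK, hμ3, hμ1, hμ2, hξμ, ?_⟩
  have hσμ : σ ≠ μ₀ := by
    rintro rfl
    exact hne' (hξσ ▸ hξμ ▸ rfl)
  -- helper: direct arc when δ is contained in both
  rcases hIσ with hIσ | ⟨rfl, hIσ⟩ | ⟨rfl, hIσ⟩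
  · rcases hIμ with hIμ | ⟨rfl, hIμ⟩ | ⟨rfl, hIμ⟩
    · exact SimpleGraph.Adj.reachable
        ⟨hσμ, hσ, hμK, hσ3, hμ3, δ, hδK, hδ2, hIσ, hIμ, hpeδ⟩
    · -- δ = e₁ : go through t₁
      exact ((C.adj_to_t1 hpeδ hσ hσ3 hσ1 (Or.inl hIσ)).reachable).trans
        (C.adj_to_t1 hpeδ hμK hμ3 hμ1 (Or.inr hIμ)).reachable.symm
    · exact ((C.swap.adj_to_t1 hpeδ hσ hσ3 hσ2 (Or.inl hIσ)).reachable).trans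
        (C.swap.adj_to_t1 hpeδ hμK hμ3 hμ2 (Or.inr hIμ)).reachable.symm
  · rcases hIμ with hIμ | ⟨_, hIμ⟩ | ⟨heq, hIμ⟩
    · exact ((C.adj_to_t1 hpeδ hσ hσ3 hσ1 (Or.inr hIσ)).reachable).trans
        (C.adj_to_t1 hpeδ hμK hμ3 hμ1 (Or.inl hIμ)).reachable.symm
    · exact ((C.adj_to_t1 hpeδ hσ hσ3 hσ1 (Or.inr hIσ)).reachable).trans
        (C.adj_to_t1 hpeδ hμK hμ3 hμ1 (Or.inr hIμ)).reachable.symm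
    · exact absurd heq C.he1_ne_e2
  · rcases hIμ with hIμ | ⟨heq, hIμ⟩ | ⟨_, hIμ⟩
    · exact ((C.swap.adj_to_t1 hpeδ hσ hσ3 hσ2 (Or.inr hIσ)).reachable).trans
        (C.swap.adj_to_t1 hpeδ hμK hμ3 hμ2 (Or.inl hIμ)).reachable.symm
    · exact absurd heq.symm C.he1_ne_e2
    · exact ((C.swap.adj_to_t1 hpeδ hσ hσ3 hσ2 (Or.inr hIσ)).reachable).trans
        (C.swap.adj_to_t1 hpeδ hμK hμ3 hμ2 (Or.inr hIμ)).reachable.symm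

/-- Backward transfer of reachability from the contracted dual graph. -/
lemma reach_back_aux {e : Finset V}
    (he : e ∈ C.K) (he2 : e.card = 2) (heuv : e ≠ C.uvS) (hee1 : e ≠ C.e₁') (hee2 : e ≠ C.e₂')
    {x w' : Finset V} (p : (C.Gp e).Walk x w') :
    ∀ σ : Finset V, σ ∈ C.K → σ.card = 3 → σ ≠ C.t₁ → σ ≠ C.t₂ → xi C.u C.v σ = x →
    ∃ τ, τ ∈ C.K ∧ τ.card = 3 ∧ τ ≠ C.t₁ ∧ τ ≠ C.t₂ ∧ xi C.u C.v τ = w' ∧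
      (C.Gc e).Reachable σ τ := by
  induction p with
  | nil =>
    intro σ hσ hσ3 hσ1 hσ2 hξσ
    exact ⟨σ, hσ, hσ3, hσ1, hσ2, hξσ, SimpleGraph.Reachable.refl σ⟩
  | @cons x m y hadj p ih =>
    intro σ hσ hσ3 hσ1 hσ2 hξσ
    obtain ⟨μ, hμK, hμ3, hμ1, hμ2, hξμ, hrμ⟩ :=
      C.adj_back he he2 heuv hee1 hee2 hadj hσ hσ3 hσ1 hσ2 hξσ
    obtain ⟨τ, hτK, hτ3, hτ1, hτ2, hξτ, hrτ⟩ := ih μ hμK hμ3 hμ1 hμ2 hξμ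
    exact ⟨τ, hτK, hτ3, hτ1, hτ2, hξτ, hrμ.trans hrτ⟩

lemma reach_back {e : Finset V}
    (he : e ∈ C.K) (he2 : e.card = 2) (heuv : e ≠ C.uvS) (hee1 : e ≠ C.e₁') (hee2 : e ≠ C.e₂')
    {σ w' : Finset V}
    (hσ : σ ∈ C.K) (hσ3 : σ.card = 3) (hσ1 : σ ≠ C.t₁) (hσ2 : σ ≠ C.t₂)
    (hr : (C.Gp e).Reachable (xi C.u C.v σ) w') :
    ∃ τ, τ ∈ C.K ∧ τ.card = 3 ∧ τ ≠ C.t₁ ∧ τ ≠ C.t₂ ∧ xi C.u C.v τ = w' ∧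
      (C.Gc e).Reachable σ τ := by
  obtain ⟨p⟩ := hr
  exact C.reach_back_aux he he2 heuv hee1 hee2 p σ hσ hσ3 hσ1 hσ2 rfl

/-! #### The parity argument: `t₁` and `t₂` are connected above `{u,v}` -/

/-- The triangles reachable from `t₁` in the dual graph above `{u,v}`. -/
def Cs : Finset (Finset V) :=
  C.K.filter (fun τ => τ.card = 3 ∧ (C.Gc C.uvS).Reachable C.t₁ τ)

/-- The number of triangles of `Cs` containing a given edge. -/
def cnt (d : Finset V) : ℕ := (C.Cs.filter (fun τ => d ⊆ τ)).card

/-- The edges of `K` through a vertex `x`. -/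
def Dx (x : V) : Finset (Finset V) := C.K.filter (fun d => d.card = 2 ∧ x ∈ d)

/-- The boundary edges of `Cs` through `x`. -/
def Bx (x : V) : Finset (Finset V) := (C.Dx x).filter (fun d => C.cnt d = 1)

lemma cnt_le_two {d : Finset V} (hd : d ∈ C.K) (hd2 : d.card = 2) : C.cnt d ≤ 2 := by
  obtain ⟨s, hs, t, ht, hst, hs3, ht3, hds, hdt, huniq⟩ := C.hman.2.2 d hd hd2
  have hsub : C.Cs.filter (fun τ => d ⊆ τ) ⊆ {s, t} := by
    intro τ hτ
    rw [Finset.mem_filter] at hτ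
    obtain ⟨hτCs, hdτ⟩ := hτ
    rw [Cs, Finset.mem_filter] at hτCs
    rcases huniq τ hτCs.1 hτCs.2.1 hdτ with rfl | rfl
    · exact Finset.mem_insert_self _ _
    · exact Finset.mem_insert_of_mem (Finset.mem_singleton_self _)
  calc C.cnt d ≤ ({s, t} : Finset (Finset V)).card := Finset.card_le_card hsub
    _ ≤ 2 := Finset.card_insert_le _ _ |>.trans (by simp)

lemma filter_sub_tri {x : V} {τ : Finset V} (hτ : τ ∈ C.K) (hτ3 : τ.card = 3) :
    ((C.Dx x).filter (fun d => d ⊆ τ)).card = if x ∈ τ then 2 else 0 := by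
  split_ifs with hx
  · -- τ = {x, y, z}
    have hcard : (τ.erase x).card = 2 := by rw [Finset.card_erase_of_mem hx, hτ3]
    obtain ⟨y, z, hyz, hyzeq⟩ := Finset.card_eq_two.mp hcard
    have hy : y ∈ τ := Finset.mem_of_mem_erase (hyzeq ▸ Finset.mem_insert_self _ _)
    have hz : z ∈ τ := Finset.mem_of_mem_erase (hyzeq ▸ Finset.mem_insert_of_mem (Finset.mem_singleton_self _))
    have hyx : y ≠ x := Finset.ne_of_mem_erase (hyzeq ▸ Finset.mem_insert_self _ _)
    have hzx : z ≠ x := Finset.ne_of_mem_erase (hyzeq ▸ Finset.mem_insert_of_mem (Finset.mem_singleton_self _))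
    have hset : (C.Dx x).filter (fun d => d ⊆ τ) = {({x, y} : Finset V), {x, z}} := by
      ext d
      rw [Finset.mem_filter, Dx, Finset.mem_filter]
      constructor
      · rintro ⟨⟨hdK, hd2, hxd⟩, hdτ⟩
        obtain ⟨p, q, hpq, rfl⟩ := Finset.card_eq_two.mp hd2
        simp only [Finset.mem_insert, Finset.mem_singleton] at hxd
        rcases hxd with rfl | rfl
        · -- d = {x, q}
          have hq : q ∈ τ.erase x := Finset.mem_erase.mpr
            ⟨fun hh => hpq hh.symm, hdτ (Finset.mem_insert_of_mem (Finset.mem_singleton_self _))⟩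
          rw [hyzeq] at hq
          rcases Finset.mem_insert.mp hq with rfl | hq
          · simp
          · rw [Finset.mem_singleton] at hq
            subst hq
            simp
        · -- d = {p, x}
          have hp : p ∈ τ.erase x := Finset.mem_erase.mpr
            ⟨hpq, hdτ (Finset.mem_insert_self _ _)⟩
          rw [hyzeq] at hp
          rcases Finset.mem_insert.mp hp with rfl | hp
          · exact Finset.mem_insert.mpr (Or.inl (Finset.pair_comm _ _))
          · rw [Finset.mem_singleton] at hp
            subst hp
            exact Finset.mem_insert.mpr
              (Or.inr (Finset.mem_singleton.mpr (Finset.pair_comm _ _)))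
      · intro hd
        rcases Finset.mem_insert.mp hd with rfl | hd
        · refine ⟨⟨?_, Finset.card_pair (Ne.symm hyx), Finset.mem_insert_self _ _⟩, ?_⟩
          · apply C.down hτ ?_ ⟨x, Finset.mem_insert_self _ _⟩
            intro w hw
            rcases Finset.mem_insert.mp hw with rfl | hw
            · exact hx
            · rw [Finset.mem_singleton] at hw; subst hw; exact hy
          · intro w hw
            rcases Finset.mem_insert.mp hw with rfl | hw
            · exact hx
            · rw [Finset.mem_singleton] at hw; subst hw; exact hy
        · rw [Finset.mem_singleton] at hd
          subst hd
          refine ⟨⟨?_, Finset.card_pair (Ne.symm hzx), Finset.mem_insert_self _ _⟩, ?_⟩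
          · apply C.down hτ ?_ ⟨x, Finset.mem_insert_self _ _⟩
            intro w hw
            rcases Finset.mem_insert.mp hw with rfl | hw
            · exact hx
            · rw [Finset.mem_singleton] at hw; subst hw; exact hz
          · intro w hw
            rcases Finset.mem_insert.mp hw with rfl | hw
            · exact hx
            · rw [Finset.mem_singleton] at hw; subst hw; exact hz
    rw [hset]
    rw [Finset.card_insert_of_notMem, Finset.card_singleton]
    rw [Finset.mem_singleton]
    intro hh
    have : y ∈ ({x, z} : Finset V) := hh ▸ (Finset.mem_insert_of_mem (Finset.mem_singleton_self _))
    rcases Finset.mem_insert.mp this with h' | h'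
    · exact hyx h'
    · rw [Finset.mem_singleton] at h'
      exact hyz h'
  · -- x ∉ τ
    rw [Finset.card_eq_zero]
    rw [Finset.filter_eq_empty_iff]
    rintro d hd hdτ
    rw [Dx, Finset.mem_filter] at hd
    exact hx (hdτ hd.2.2)

/-- Each vertex lies on an even number of boundary edges of `Cs`. -/
lemma Bx_even (x : V) : Even (C.Bx x).card := by
  classical
  have hsum : ∑ d ∈ C.Dx x, C.cnt d = ∑ τ ∈ C.Cs, ((C.Dx x).filter (fun d => d ⊆ τ)).card := by
    unfold cnt
    simp_rw [Finset.card_filter]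
    exact Finset.sum_comm
  have heven : Even (∑ d ∈ C.Dx x, C.cnt d) := by
    rw [hsum]
    rw [even_iff_two_dvd]
    apply Finset.dvd_sum
    intro τ hτ
    rw [Cs, Finset.mem_filter] at hτ
    rw [C.filter_sub_tri hτ.1 hτ.2.1]
    split_ifs
    · exact dvd_refl 2
    · exact dvd_zero 2
  -- pass to ZMod 2
  rw [← ZMod.natCast_eq_zero_iff_even] at heven ⊢
  have hcast : ((C.Bx x).card : ZMod 2) = ∑ d ∈ C.Dx x, (C.cnt d : ZMod 2) := by
    rw [Bx, Finset.card_filter]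
    push_cast
    apply Finset.sum_congr rfl
    intro d hd
    rw [Dx, Finset.mem_filter] at hd
    have hle : C.cnt d ≤ 2 := C.cnt_le_two hd.1 hd.2.1
    have : C.cnt d = 0 ∨ C.cnt d = 1 ∨ C.cnt d = 2 := by omega
    rcases this with h | h | h <;> rw [h] <;> decide
  rw [hcast, ← Nat.cast_sum, heven]

/-- If `t₂` is not reachable from `t₁` above `{u,v}`, then `{u,v}` is a boundary edge. -/
lemma cnt_uv (hno : ¬ (C.Gc C.uvS).Reachable C.t₁ C.t₂) : C.cnt C.uvS = 1 := by
  classical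
  have hset : C.Cs.filter (fun τ => C.uvS ⊆ τ) = {C.t₁} := by
    ext τ
    rw [Finset.mem_filter, Cs, Finset.mem_filter, Finset.mem_singleton]
    constructor
    · rintro ⟨⟨hτK, hτ3, hreach⟩, hsub⟩
      rcases C.honly τ hτK hτ3 (by rwa [← C.uvS_def]) with h | rfl
      · exact h
      · exact absurd hreach hno
    · rintro rfl
      exact ⟨⟨C.ht1, C.ht1c, SimpleGraph.Reachable.refl _⟩, C.ht1uv⟩
  rw [cnt, hset, Finset.card_singleton]

/-- The boundary graph: edges of `K` other than `{u,v}` lying on exactly one triangle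
of `Cs`. -/
def Hb : SimpleGraph V where
  Adj x y := x ≠ y ∧ ({x, y} : Finset V) ∈ C.K ∧ C.cnt {x, y} = 1 ∧ ({x, y} : Finset V) ≠ C.uvS
  symm := by
    constructor
    rintro x y ⟨h1, h2, h3, h4⟩
    rw [Finset.pair_comm y x]
    exact ⟨h1.symm, h2, h3, h4⟩
  loopless := by constructor; rintro x ⟨hx, -⟩; exact hx rfl

lemma Hb_le : C.Hb ≤ vertGraph C.K C.prec C.uvS := by
  rintro x y ⟨h1, h2, h3, h4⟩
  refine ⟨h1, h2, ?_⟩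
  apply C.prec_of_not h2 C.uvS_mem h4
  intro hcon
  -- {x,y} is above uv, so its two triangles are joined in the dual graph above uv
  have hd2 : ({x, y} : Finset V).card = 2 := Finset.card_pair h1
  obtain ⟨s, hs, t, ht, hst, hs3, ht3, hds, hdt, huniq⟩ := C.hman.2.2 _ h2 hd2
  have hadj : (C.Gc C.uvS).Adj s t := ⟨hst, hs, ht, hs3, ht3, {x, y}, h2, hd2, hds, hdt, hcon⟩
  have hiff : (C.Gc C.uvS).Reachable C.t₁ s ↔ (C.Gc C.uvS).Reachable C.t₁ t :=
    ⟨fun hr => hr.trans hadj.reachable, fun hr => hr.trans hadj.symm.reachable⟩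
  have hsubst : C.Cs.filter (fun τ => ({x, y} : Finset V) ⊆ τ) ⊆ {s, t} := by
    intro τ hτ
    rw [Finset.mem_filter] at hτ
    obtain ⟨hτCs, hdτ⟩ := hτ
    rw [Cs, Finset.mem_filter] at hτCs
    rcases huniq τ hτCs.1 hτCs.2.1 hdτ with rfl | rfl
    · exact Finset.mem_insert_self _ _
    · exact Finset.mem_insert_of_mem (Finset.mem_singleton_self _)
  by_cases hsC : (C.Gc C.uvS).Reachable C.t₁ s
  · -- both s and t in Cs, so cnt = 2 ≠ 1
    have hset : C.Cs.filter (fun τ => ({x, y} : Finset V) ⊆ τ) = {s, t} := by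
      apply Finset.Subset.antisymm hsubst
      intro τ hτ
      rcases Finset.mem_insert.mp hτ with rfl | hτ'
      · exact Finset.mem_filter.mpr ⟨Finset.mem_filter.mpr ⟨hs, hs3, hsC⟩, hds⟩
      · rw [Finset.mem_singleton] at hτ'
        subst hτ'
        exact Finset.mem_filter.mpr ⟨Finset.mem_filter.mpr ⟨ht, ht3, hiff.mp hsC⟩, hdt⟩
    have : C.cnt {x, y} = 2 := by
      rw [cnt, hset, Finset.card_insert_of_notMem (by rwa [Finset.mem_singleton]),
        Finset.card_singleton]
    omega
  · -- neither in Cs, so cnt = 0 ≠ 1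
    have hset : C.Cs.filter (fun τ => ({x, y} : Finset V) ⊆ τ) = ∅ := by
      rw [Finset.eq_empty_iff_forall_notMem]
      intro τ hτ
      have hτ' := hsubst hτ
      rw [Finset.mem_filter, Cs, Finset.mem_filter] at hτ
      rcases Finset.mem_insert.mp hτ' with rfl | hτ''
      · exact hsC hτ.1.2.2
      · rw [Finset.mem_singleton] at hτ''
        subst hτ''
        exact hsC (hiff.mpr hτ.1.2.2)
    have : C.cnt {x, y} = 0 := by rw [cnt, hset, Finset.card_empty]
    omega

open Classical in
lemma Hb_degree (x : V) : C.Hb.degree x = ((C.Bx x).filter (fun d => d ≠ C.uvS)).card := by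
  rw [← SimpleGraph.card_neighborFinset_eq_degree]
  apply Finset.card_bij (fun y _ => ({x, y} : Finset V))
  · intro y hy
    rw [SimpleGraph.mem_neighborFinset] at hy
    obtain ⟨h1, h2, h3, h4⟩ := hy
    exact Finset.mem_filter.mpr ⟨Finset.mem_filter.mpr ⟨Finset.mem_filter.mpr
      ⟨h2, Finset.card_pair h1, Finset.mem_insert_self _ _⟩, h3⟩, h4⟩
  · intro y hy y' hy' heq
    rw [SimpleGraph.mem_neighborFinset] at hy hy'
    have : y ∈ ({x, y'} : Finset V) := heq ▸ Finset.mem_insert_of_mem (Finset.mem_singleton_self _)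
    rcases Finset.mem_insert.mp this with h | h
    · exact absurd h.symm hy.1
    · rwa [Finset.mem_singleton] at h
  · intro d hd
    rw [Finset.mem_filter] at hd
    obtain ⟨hd', hduv⟩ := hd
    rw [Bx, Finset.mem_filter] at hd'
    obtain ⟨hd'', hcnt⟩ := hd'
    rw [Dx, Finset.mem_filter] at hd''
    obtain ⟨hdK, hd2, hxd⟩ := hd''
    obtain ⟨p, q, hpq, rfl⟩ := Finset.card_eq_two.mp hd2
    simp only [Finset.mem_insert, Finset.mem_singleton] at hxd
    rcases hxd with rfl | rfl
    · refine ⟨q, ?_, rfl⟩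
      rw [SimpleGraph.mem_neighborFinset]
      exact ⟨hpq, hdK, hcnt, hduv⟩
    · refine ⟨p, ?_, Finset.pair_comm _ _⟩
      rw [SimpleGraph.mem_neighborFinset]
      refine ⟨fun hh => hpq hh.symm, ?_, ?_, ?_⟩
      · rwa [Finset.pair_comm]
      · rwa [Finset.pair_comm]
      · rwa [Finset.pair_comm]

open Classical in
lemma Hb_deg_even {x : V} (hxu : x ≠ C.u) (hxv : x ≠ C.v) : Even (C.Hb.degree x) := by
  rw [C.Hb_degree x]
  have : (C.Bx x).filter (fun d => d ≠ C.uvS) = C.Bx x := by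
    apply Finset.filter_true_of_mem
    intro d hd
    rw [Bx, Finset.mem_filter, Dx, Finset.mem_filter] at hd
    rintro rfl
    rw [C.uvS_def] at hd
    rcases Finset.mem_insert.mp hd.1.2.2 with h | h
    · exact hxu h
    · rw [Finset.mem_singleton] at h
      exact hxv h
  rw [this]
  exact C.Bx_even x

open Classical in
lemma Hb_deg_u_odd (hno : ¬ (C.Gc C.uvS).Reachable C.t₁ C.t₂) : Odd (C.Hb.degree C.u) := by
  rw [C.Hb_degree C.u, Finset.filter_ne']
  have hmem : C.uvS ∈ C.Bx C.u := by
    rw [Bx, Finset.mem_filter, Dx, Finset.mem_filter]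
    exact ⟨⟨C.uvS_mem, C.uvS_card, by rw [C.uvS_def]; exact Finset.mem_insert_self _ _⟩,
      C.cnt_uv hno⟩
  rw [Finset.card_erase_of_mem hmem]
  obtain ⟨k, hk⟩ := C.Bx_even C.u
  have hpos : 1 ≤ (C.Bx C.u).card := Finset.card_pos.mpr ⟨_, hmem⟩
  refine ⟨k - 1, ?_⟩
  omega

open Classical in
lemma Hb_deg_v_odd (hno : ¬ (C.Gc C.uvS).Reachable C.t₁ C.t₂) : Odd (C.Hb.degree C.v) := by
  rw [C.Hb_degree C.v, Finset.filter_ne']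
  have hmem : C.uvS ∈ C.Bx C.v := by
    rw [Bx, Finset.mem_filter, Dx, Finset.mem_filter]
    refine ⟨⟨C.uvS_mem, C.uvS_card, ?_⟩, C.cnt_uv hno⟩
    rw [C.uvS_def]
    exact Finset.mem_insert_of_mem (Finset.mem_singleton_self _)
  rw [Finset.card_erase_of_mem hmem]
  obtain ⟨k, hk⟩ := C.Bx_even C.v
  have hpos : 1 ≤ (C.Bx C.v).card := Finset.card_pos.mpr ⟨_, hmem⟩
  refine ⟨k - 1, ?_⟩
  omega

/-- The bridge: `t₁` and `t₂` are connected in the dual graph above `{u,v}`. -/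
lemma bridge_core : (C.Gc C.uvS).Reachable C.t₁ C.t₂ := by
  classical
  by_contra hno
  -- restrict the boundary graph to the component of u
  let H2 : SimpleGraph V :=
    { Adj := fun x y => C.Hb.Adj x y ∧ C.Hb.Reachable C.u x ∧ C.Hb.Reachable C.u y
      symm := by constructor; rintro x y ⟨h1, h2, h3⟩; exact ⟨h1.symm, h3, h2⟩
      loopless := by constructor; rintro x ⟨hx, -⟩; exact C.Hb.loopless.irrefl x hx }
  have hdeg : ∀ x, C.Hb.Reachable C.u x → H2.degree x = C.Hb.degree x := by
    intro x hreach
    rw [← SimpleGraph.card_neighborFinset_eq_degree, ← SimpleGraph.card_neighborFinset_eq_degree]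
    congr 1
    ext y
    rw [SimpleGraph.mem_neighborFinset, SimpleGraph.mem_neighborFinset]
    constructor
    · rintro ⟨h1, -, -⟩
      exact h1
    · intro h1
      exact ⟨h1, hreach, hreach.trans h1.reachable⟩
  have huodd : Odd (H2.degree C.u) := by
    rw [hdeg C.u (SimpleGraph.Reachable.refl _)]
    exact C.Hb_deg_u_odd hno
  obtain ⟨w, hwu, hwodd⟩ := H2.exists_ne_odd_degree_of_exists_odd_degree C.u huodd
  have hwpos : 0 < H2.degree w := Nat.pos_of_ne_zero (by
    intro hh
    rw [hh] at hwodd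
    exact (Nat.not_odd_iff_even.mpr (Even.zero)) hwodd)
  obtain ⟨y, hy⟩ := (SimpleGraph.degree_pos_iff_exists_adj _ _).mp hwpos
  have hreachw : C.Hb.Reachable C.u w := hy.2.1
  have hwodd' : Odd (C.Hb.degree w) := by rwa [hdeg w hreachw] at hwodd
  have hwv : w = C.v := by
    by_contra hwv
    exact (Nat.not_odd_iff_even.mpr (C.Hb_deg_even hwu hwv)) hwodd'
  subst hwv
  exact C.not_reach_uv (hreachw.mono C.Hb_le)

lemma bridge_core' : (C.Gc C.uvS).Reachable C.t₂ C.t₁ := C.bridge_core.symm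

/-! #### Forward transfer of reachability -/

/-- Three distinct triangles cannot share an edge. -/
lemma three_tri {d x y z : Finset V} (hd : d ∈ C.K) (hd2 : d.card = 2)
    (hx : x ∈ C.K) (hx3 : x.card = 3) (hdx : d ⊆ x)
    (hy : y ∈ C.K) (hy3 : y.card = 3) (hdy : d ⊆ y)
    (hz : z ∈ C.K) (hz3 : z.card = 3) (hdz : d ⊆ z)
    (hxy : x ≠ y) (hxz : x ≠ z) (hyz : y ≠ z) : False := by
  obtain ⟨s, hs, t, ht, hst, hs3, ht3, hds, hdt, huniq⟩ := C.hman.2.2 d hd hd2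
  rcases huniq x hx hx3 hdx with rfl | rfl <;>
    rcases huniq y hy hy3 hdy with rfl | rfl <;>
      rcases huniq z hz hz3 hdz with rfl | rfl <;> simp_all

/-- The node replacement map collapsing `t₁` to `s₁'` and `t₂` to `s₂'`. -/
def fmap (τ : Finset V) : Finset V :=
  if τ = C.t₁ then C.sp1 else if τ = C.t₂ then C.sp2 else τ

lemma fmap_t1 : C.fmap C.t₁ = C.sp1 := if_pos rfl
lemma fmap_t2 : C.fmap C.t₂ = C.sp2 := by rw [fmap, if_neg (Ne.symm C.ht12), if_pos rfl]
lemma fmap_of {τ : Finset V} (h1 : τ ≠ C.t₁) (h2 : τ ≠ C.t₂) : C.fmap τ = τ := by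
  rw [fmap, if_neg h1, if_neg h2]

/-- Step through `t₁` : a dual arc from `t₁` at any threshold `c` whose arcs are above `e`
transfers to reachability from `ξ s₁'` in the contracted graph. -/
lemma step_t1 {e c y : Finset V}
    (he : e ∈ C.K) (he2 : e.card = 2) (heuv : e ≠ C.uvS) (hee1 : e ≠ C.e₁') (hee2 : e ≠ C.e₂')
    (hec : ∀ d, C.prec c d → C.prec e d)
    (hadj : (C.Gc c).Adj C.t₁ y) (hy1 : y ≠ C.t₁) (hy2 : y ≠ C.t₂) :
    (C.Gp e).Reachable (xi C.u C.v C.sp1) (xi C.u C.v y) := by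
  obtain ⟨hne', _, hyK, _, hy3, d, hdK, hd2, hdt1, hdy, hpcd⟩ := hadj
  have hped : C.prec e d := hec d hpcd
  rcases C.two_subset_t1 hdt1 hd2 with rfl | hd' | hd'
  · -- d = {u,v} ⊆ y : impossible since y ∉ {t₁, t₂}
    exfalso
    rcases C.honly y hyK hy3 hdy with h | h
    · exact hy1 h
    · exact hy2 h
  · -- d ∈ {e₁, e₁'} with value {u,a}
    rcases C.edge_shape1 with ⟨h1, h2⟩ | ⟨h1, h2⟩
    · -- d = e₁
      rw [← h1] at hd'
      subst hd'
      exact (C.adj_merged1 he he2 heuv hee1 hee2 hped hyK hy3 hy1 hy2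
        C.sp1_mem C.sp1_card C.sp1_ne_t1 C.sp1_ne_t2 hdy C.sp1_sub).reachable.symm
    · -- d = e₁' : y = sp1
      rw [← h2] at hd'
      subst hd'
      rcases C.sp1_uniq y hyK hy3 hdy with h | rfl
      · exact absurd h hy1
      · exact SimpleGraph.Reachable.refl _
  · -- d ∈ {e₁, e₁'} with value {v,a}
    rcases C.edge_shape1 with ⟨h1, h2⟩ | ⟨h1, h2⟩
    · -- d = e₁'
      rw [← h2] at hd'
      subst hd'
      rcases C.sp1_uniq y hyK hy3 hdy with h | rfl
      · exact absurd h hy1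
      · exact SimpleGraph.Reachable.refl _
    · -- d = e₁
      rw [← h1] at hd'
      subst hd'
      exact (C.adj_merged1 he he2 heuv hee1 hee2 hped hyK hy3 hy1 hy2
        C.sp1_mem C.sp1_card C.sp1_ne_t1 C.sp1_ne_t2 hdy C.sp1_sub).reachable.symm

/-- A single dual arc at threshold `c` transfers to the contracted graph under `fmap`. -/
lemma step_aux {e c : Finset V}
    (he : e ∈ C.K) (he2 : e.card = 2) (heuv : e ≠ C.uvS) (hee1 : e ≠ C.e₁') (hee2 : e ≠ C.e₂')
    (hec : ∀ d, C.prec c d → C.prec e d)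
    (hbr : C.prec c C.uvS → (C.Gp e).Reachable (xi C.u C.v C.sp1) (xi C.u C.v C.sp2))
    {x y : Finset V} (hadj : (C.Gc c).Adj x y) :
    (C.Gp e).Reachable (xi C.u C.v (C.fmap x)) (xi C.u C.v (C.fmap y)) := by
  have hxK : x ∈ C.K := hadj.2.1
  have hyK : y ∈ C.K := hadj.2.2.1
  have hx3 : x.card = 3 := hadj.2.2.2.1
  have hy3 : y.card = 3 := hadj.2.2.2.2.1
  have hxy : x ≠ y := hadj.1
  by_cases hx1 : x = C.t₁
  · subst hx1
    by_cases hy2 : y = C.t₂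
    · subst hy2
      -- the arc is {u,v}
      obtain ⟨-, -, -, -, -, d, hdK, hd2, hdt1, hdt2, hpcd⟩ := hadj
      have : d = C.uvS := C.inter_t1_t2 hd2 hdt1 hdt2
      subst this
      rw [C.fmap_t1, C.fmap_t2]
      exact hbr hpcd
    · have hy1 : y ≠ C.t₁ := fun hh => hxy hh.symm
      rw [C.fmap_t1, C.fmap_of hy1 hy2]
      exact C.step_t1 he he2 heuv hee1 hee2 hec hadj hy1 hy2
  · by_cases hx2 : x = C.t₂
    · subst hx2
      by_cases hy1 : y = C.t₁
      · subst hy1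
        obtain ⟨-, -, -, -, -, d, hdK, hd2, hdt2, hdt1, hpcd⟩ := hadj
        have : d = C.uvS := C.inter_t1_t2 hd2 hdt1 hdt2
        subst this
        rw [C.fmap_t1, C.fmap_t2]
        exact (hbr hpcd).symm
      · have hy2 : y ≠ C.t₂ := fun hh => hxy hh.symm
        rw [C.fmap_t2, C.fmap_of hy1 hy2]
        exact C.swap.step_t1 he he2 heuv hee2 hee1 hec hadj hy2 hy1
    · -- x is a surviving triangle
      rw [C.fmap_of hx1 hx2]
      by_cases hy1 : y = C.t₁
      · subst hy1
        rw [C.fmap_t1]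
        exact (C.step_t1 he he2 heuv hee1 hee2 hec hadj.symm hx1 hx2).symm
      · by_cases hy2 : y = C.t₂
        · subst hy2
          rw [C.fmap_t2]
          exact (C.swap.step_t1 he he2 heuv hee2 hee1 hec hadj.symm hx2 hx1).symm
        · -- both survive: direct arc
          rw [C.fmap_of hy1 hy2]
          obtain ⟨_, _, _, _, _, d, hdK, hd2, hdx, hdy, hpcd⟩ := hadj
          have hduv : d ≠ C.uvS := by
            rintro rfl
            rcases C.honly x hxK hx3 hdx with h | h
            · exact hx1 h
            · exact hx2 h
          have hde1 : d ≠ C.e₁' := by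
            rintro rfl
            exact C.three_tri hdK hd2 hxK hx3 hdx hyK hy3 hdy C.ht1 C.ht1c C.he1' hxy hx1 hy1
          have hde2 : d ≠ C.e₂' := by
            rintro rfl
            exact C.three_tri hdK hd2 hxK hx3 hdx hyK hy3 hdy C.ht2 C.ht2c C.he2' hxy hx2 hy2
          exact (C.adj_fwd he he2 heuv hee1 hee2 hdK hd2 hduv hde1 hde2 hxK hx3 hx1 hx2
            hyK hy3 hy1 hy2 hdx hdy hxy (hec d hpcd)).reachable

/-- Transfer of reachability at any threshold into the contracted graph. -/
lemma trans_aux {e c : Finset V}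
    (he : e ∈ C.K) (he2 : e.card = 2) (heuv : e ≠ C.uvS) (hee1 : e ≠ C.e₁') (hee2 : e ≠ C.e₂')
    (hec : ∀ d, C.prec c d → C.prec e d)
    (hbr : C.prec c C.uvS → (C.Gp e).Reachable (xi C.u C.v C.sp1) (xi C.u C.v C.sp2))
    {x y : Finset V} (hr : (C.Gc c).Reachable x y) :
    (C.Gp e).Reachable (xi C.u C.v (C.fmap x)) (xi C.u C.v (C.fmap y)) := by
  obtain ⟨p⟩ := hr
  induction p with
  | nil => exact SimpleGraph.Reachable.refl _
  | @cons x m y hadj p ih =>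
    exact (C.step_aux he he2 heuv hee1 hee2 hec hbr hadj).trans ih

/-- The bridge in the contracted graph: if `e ≺ {u,v}` then `ξ s₁'` and `ξ s₂'` are
connected in the contracted dual graph. -/
lemma bridge_Gp {e : Finset V}
    (he : e ∈ C.K) (he2 : e.card = 2) (heuv : e ≠ C.uvS) (hee1 : e ≠ C.e₁') (hee2 : e ≠ C.e₂')
    (hpeuv : C.prec e C.uvS) :
    (C.Gp e).Reachable (xi C.u C.v C.sp1) (xi C.u C.v C.sp2) := by
  have h := C.trans_aux he he2 heuv hee1 hee2
    (fun d hd => C.prec_trans hpeuv hd)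
    (fun hcon => absurd hcon (C.prec_irrefl _)) C.bridge_core
  rwa [C.fmap_t1, C.fmap_t2] at h

/-- Forward transfer of reachability. -/
lemma reach_fwd {e : Finset V}
    (he : e ∈ C.K) (he2 : e.card = 2) (heuv : e ≠ C.uvS) (hee1 : e ≠ C.e₁') (hee2 : e ≠ C.e₂')
    {x y : Finset V} (hr : (C.Gc e).Reachable x y) :
    (C.Gp e).Reachable (xi C.u C.v (C.fmap x)) (xi C.u C.v (C.fmap y)) :=
  C.trans_aux he he2 heuv hee1 hee2 (fun _ hd => hd)
    (fun hpeuv => C.bridge_Gp he he2 heuv hee1 hee2 hpeuv) hr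

/-! #### Greatest triangles avoid `t₁` and `t₂` -/

lemma e_eq_e1_of {e : Finset V} (he2 : e.card = 2) (heuv : e ≠ C.uvS) (hee1 : e ≠ C.e₁')
    (hsub : e ⊆ C.t₁) : e = C.e₁ := by
  rcases C.two_subset_t1 hsub he2 with h | h | h
  · exact absurd h heuv
  · rcases C.edge_shape1 with ⟨h1, _⟩ | ⟨_, h2⟩
    · exact h.trans h1.symm
    · exact absurd (h.trans h2.symm) hee1
  · rcases C.edge_shape1 with ⟨_, h2⟩ | ⟨h1, _⟩
    · exact absurd (h.trans h2.symm) hee1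
    · exact h.trans h1.symm

lemma reach_tri_props {e σ τ : Finset V} (hr : (C.Gc e).Reachable σ τ) :
    σ = τ ∨ (τ ∈ C.K ∧ τ.card = 3) := by
  obtain ⟨p⟩ := hr
  induction p with
  | nil => exact Or.inl rfl
  | @cons x m y hadj p ih =>
    rcases ih with rfl | hp
    · exact Or.inr ⟨hadj.2.2.1, hadj.2.2.2.2.1⟩
    · exact Or.inr hp

/-- If `e` precedes `e₁'` or reaches `t₁`, the greatest triangle of the component of a
triangle containing `e` cannot be `t₁`. -/
lemma gmax_ne_t1 {e σ w : Finset V}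
    (he : e ∈ C.K) (he2 : e.card = 2) (heuv : e ≠ C.uvS) (hee1 : e ≠ C.e₁') (hee2 : e ≠ C.e₂')
    (hσK : σ ∈ C.K) (hσ3 : σ.card = 3) (heσ : e ⊆ σ)
    (hg : GreatestTri (C.Gc e) C.prec σ w) : w ≠ C.t₁ := by
  rintro rfl
  -- first, e ≺ e₁'
  have hpe1' : C.prec e C.e₁' := by
    by_cases hσ1 : σ = C.t₁
    · subst hσ1
      have : e = C.e₁ := C.e_eq_e1_of he2 heuv hee1 heσ
      subst this
      exact C.hp1
    · obtain ⟨p⟩ := hg.1.symm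
      cases p with
      | nil => exact absurd rfl hσ1
      | @cons _ m _ hadj p' =>
        obtain ⟨-, -, -, -, -, d, hdK, hd2, hdt1, -, hped⟩ := hadj
        rcases C.two_subset_t1 hdt1 hd2 with rfl | h | h
        · exact C.prec_trans hped C.uv_prec_e1'
        · rcases C.edge_shape1 with ⟨h1, _⟩ | ⟨_, h2⟩
          · rw [← h1] at h; subst h; exact C.prec_trans hped C.hp1
          · rw [← h2] at h; subst h; exact hped
        · rcases C.edge_shape1 with ⟨_, h2⟩ | ⟨h1, _⟩
          · rw [← h2] at h; subst h; exact hped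
          · rw [← h1] at h; subst h; exact C.prec_trans hped C.hp1
  -- t₁ is adjacent to sp1 at threshold e
  have hadj1 : (C.Gc e).Adj C.t₁ C.sp1 :=
    ⟨Ne.symm C.sp1_ne_t1, C.ht1, C.sp1_mem, C.ht1c, C.sp1_card,
      C.e₁', C.he1'K, C.he1'c, C.he1', C.sp1_sub, hpe1'⟩
  obtain ⟨M, hM, hpM⟩ := C.exists_M1
  have hrM : (C.Gc e).Reachable C.sp1 M := hM.1.mono (C.Gc_mono hpe1')
  have hrσM : (C.Gc e).Reachable σ M := (hg.1.trans hadj1.reachable).trans hrM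
  rcases hg.2 M hrσM with h | h
  · exact C.prec_irrefl M (h ▸ hpM)
  · exact C.prec_asymm hpM h

lemma gmax_ne_t2 {e σ w : Finset V}
    (he : e ∈ C.K) (he2 : e.card = 2) (heuv : e ≠ C.uvS) (hee1 : e ≠ C.e₁') (hee2 : e ≠ C.e₂')
    (hσK : σ ∈ C.K) (hσ3 : σ.card = 3) (heσ : e ⊆ σ)
    (hg : GreatestTri (C.Gc e) C.prec σ w) : w ≠ C.t₂ :=
  C.swap.gmax_ne_t1 he he2 heuv hee2 hee1 hσK hσ3 heσ hg

/-! #### Endpoint bookkeeping -/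

lemma reach_fmap_self {e σ : Finset V} (he2 : e.card = 2) (heuv : e ≠ C.uvS)
    (hee1 : e ≠ C.e₁') (hee2 : e ≠ C.e₂')
    (hσK : σ ∈ C.K) (hσ3 : σ.card = 3) (heσ : e ⊆ σ) :
    (C.Gc e).Reachable σ (C.fmap σ) := by
  by_cases h1 : σ = C.t₁
  · subst h1
    rw [C.fmap_t1]
    have he1 : e = C.e₁ := C.e_eq_e1_of he2 heuv hee1 heσ
    subst he1
    exact SimpleGraph.Adj.reachable
      ⟨Ne.symm C.sp1_ne_t1, C.ht1, C.sp1_mem, C.ht1c, C.sp1_card,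
        C.e₁', C.he1'K, C.he1'c, C.he1', C.sp1_sub, C.hp1⟩
  · by_cases h2 : σ = C.t₂
    · subst h2
      rw [C.fmap_t2]
      have he2' : e = C.e₂ := C.swap.e_eq_e1_of he2 heuv hee2 heσ
      subst he2'
      exact SimpleGraph.Adj.reachable
        ⟨Ne.symm C.sp2_ne_t2, C.ht2, C.sp2_mem, C.ht2c, C.sp2_card,
          C.e₂', C.he2'K, C.he2'c, C.he2', C.sp2_sub, C.hp2⟩
    · rw [C.fmap_of h1 h2]

lemma fmap_props {e σ : Finset V} (he2 : e.card = 2) (heuv : e ≠ C.uvS)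
    (hee1 : e ≠ C.e₁') (hee2 : e ≠ C.e₂')
    (hσK : σ ∈ C.K) (hσ3 : σ.card = 3) (heσ : e ⊆ σ) :
    C.fmap σ ∈ C.K ∧ (C.fmap σ).card = 3 ∧ C.fmap σ ≠ C.t₁ ∧ C.fmap σ ≠ C.t₂ ∧
      xi C.u C.v e ⊆ xi C.u C.v (C.fmap σ) := by
  by_cases h1 : σ = C.t₁
  · subst h1
    rw [C.fmap_t1]
    have he1 : e = C.e₁ := C.e_eq_e1_of he2 heuv hee1 heσ
    subst he1
    refine ⟨C.sp1_mem, C.sp1_card, C.sp1_ne_t1, C.sp1_ne_t2, ?_⟩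
    rw [C.xi_e1, ← C.xi_e1']
    exact xi_subset C.sp1_sub
  · by_cases h2 : σ = C.t₂
    · subst h2
      rw [C.fmap_t2]
      have he2' : e = C.e₂ := C.swap.e_eq_e1_of he2 heuv hee2 heσ
      subst he2'
      refine ⟨C.sp2_mem, C.sp2_card, C.sp2_ne_t1, C.sp2_ne_t2, ?_⟩
      rw [C.xi_e2, ← C.xi_e2']
      exact xi_subset C.sp2_sub
    · rw [C.fmap_of h1 h2]
      exact ⟨hσK, hσ3, h1, h2, xi_subset heσ⟩

lemma e2_union_e2' : C.e₂ ∪ C.e₂' = C.t₂ := C.swap.e1_union_e1'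

lemma fmap_ne {e s t : Finset V} (he2 : e.card = 2) (heuv : e ≠ C.uvS)
    (hee1 : e ≠ C.e₁') (hee2 : e ≠ C.e₂')
    (hsK : s ∈ C.K) (hs3 : s.card = 3) (hes : e ⊆ s)
    (htK : t ∈ C.K) (ht3 : t.card = 3) (het : e ⊆ t) (hst : s ≠ t) :
    C.fmap s ≠ C.fmap t := by
  have key : ∀ s t : Finset V, s ∈ C.K → s.card = 3 → e ⊆ s → t ∈ C.K → t.card = 3 → e ⊆ t →
      s ≠ t → s = C.t₁ → C.fmap s ≠ C.fmap t := by
    intro s t hsK hs3 hes htK ht3 het hst h1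
    subst h1
    rw [C.fmap_t1]
    have he1 : e = C.e₁ := C.e_eq_e1_of he2 heuv hee1 hes
    subst he1
    have ht1 : t ≠ C.t₁ := fun hh => hst hh.symm
    have ht2 : t ≠ C.t₂ := by
      rintro rfl
      exact C.he1uv (C.inter_t1_t2 C.he1c C.he1 het)
    rw [C.fmap_of ht1 ht2]
    rintro rfl
    apply ht1
    refine (Finset.eq_of_subset_of_card_le ?_ (by rw [C.ht1c, C.sp1_card])).symm
    rw [← C.e1_union_e1']
    exact Finset.union_subset het C.sp1_sub
  have key2 : ∀ s t : Finset V, s ∈ C.K → s.card = 3 → e ⊆ s → t ∈ C.K → t.card = 3 → e ⊆ t →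
      s ≠ t → s = C.t₂ → C.fmap s ≠ C.fmap t := by
    intro s t hsK hs3 hes htK ht3 het hst h2
    subst h2
    rw [C.fmap_t2]
    have he2'' : e = C.e₂ := C.swap.e_eq_e1_of he2 heuv hee2 hes
    subst he2''
    have ht2 : t ≠ C.t₂ := fun hh => hst hh.symm
    have ht1 : t ≠ C.t₁ := by
      rintro rfl
      exact C.he2uv (C.inter_t1_t2 C.he2c het C.he2)
    rw [C.fmap_of ht1 ht2]
    rintro rfl
    apply ht2
    refine (Finset.eq_of_subset_of_card_le ?_ (by rw [C.ht2c, C.sp2_card])).symm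
    rw [← C.e2_union_e2']
    exact Finset.union_subset het C.sp2_sub
  by_cases h1 : s = C.t₁
  · exact key s t hsK hs3 hes htK ht3 het hst h1
  · by_cases h2 : s = C.t₂
    · exact key2 s t hsK hs3 hes htK ht3 het hst h2
    · by_cases h1' : t = C.t₁
      · exact fun hh => key t s htK ht3 het hsK hs3 hes (Ne.symm hst) h1' hh.symm
      · by_cases h2' : t = C.t₂
        · exact fun hh => key2 t s htK ht3 het hsK hs3 hes (Ne.symm hst) h2' hh.symm
        · rw [C.fmap_of h1 h2, C.fmap_of h1' h2']
          exact hst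

/-! #### The main assembly -/

theorem main_ctx (e r : Finset V) (heuv : e ≠ C.uvS) (hee1 : e ≠ C.e₁') (hee2 : e ≠ C.e₂')
    (hpair : PairedET C.K C.prec e r) :
    PairedET (C.K.image (xi C.u C.v)) (precInd C.K C.u C.v C.prec)
      (xi C.u C.v e) (xi C.u C.v r) := by
  obtain ⟨s, t, ws, wt, hst, hsK, htK, hs3, ht3, hes, het, heK, he2, hnr, gs, gt, hdisj⟩ := hpair
  obtain ⟨hfsK, hfs3, hfs1, hfs2, hfssub⟩ := C.fmap_props he2 heuv hee1 hee2 hsK hs3 hes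
  obtain ⟨hftK, hft3, hft1, hft2, hftsub⟩ := C.fmap_props he2 heuv hee1 hee2 htK ht3 het
  have hreach_s := C.reach_fmap_self he2 heuv hee1 hee2 hsK hs3 hes
  have hreach_t := C.reach_fmap_self he2 heuv hee1 hee2 htK ht3 het
  have hws1 : ws ≠ C.t₁ := C.gmax_ne_t1 heK he2 heuv hee1 hee2 hsK hs3 hes gs
  have hws2 : ws ≠ C.t₂ := C.gmax_ne_t2 heK he2 heuv hee1 hee2 hsK hs3 hes gs
  have hwt1 : wt ≠ C.t₁ := C.gmax_ne_t1 heK he2 heuv hee1 hee2 htK ht3 het gt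
  have hwt2 : wt ≠ C.t₂ := C.gmax_ne_t2 heK he2 heuv hee1 hee2 htK ht3 het gt
  have hwsP : ws ∈ C.K ∧ ws.card = 3 := by
    rcases C.reach_tri_props gs.1 with h | h
    · rw [← h]; exact ⟨hsK, hs3⟩
    · exact h
  have hwtP : wt ∈ C.K ∧ wt.card = 3 := by
    rcases C.reach_tri_props gt.1 with h | h
    · rw [← h]; exact ⟨htK, ht3⟩
    · exact h
  have hmpws := C.minpre_tri hwsP.1 hwsP.2 hws1 hws2
  have hmpwt := C.minpre_tri hwtP.1 hwtP.2 hwt1 hwt2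
  have hnr' : ¬ (C.Gp e).Reachable (xi C.u C.v (C.fmap s)) (xi C.u C.v (C.fmap t)) := by
    intro hr
    obtain ⟨τ, hτK, hτ3, hτ1, hτ2, hξτ, hrr⟩ :=
      C.reach_back heK he2 heuv hee1 hee2 hfsK hfs3 hfs1 hfs2 hr
    have hττ : τ = C.fmap t :=
      C.tri_inj hτK hτ3 hτ1 hτ2 hftK hft3 hft1 hft2 (by rw [hξτ])
    subst hττ
    exact hnr ((hreach_s.trans hrr).trans hreach_t.symm)
  have hgs' : GreatestTri (C.Gp e) (precInd C.K C.u C.v C.prec)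
      (xi C.u C.v (C.fmap s)) (xi C.u C.v ws) := by
    constructor
    · have := C.reach_fwd heK he2 heuv hee1 hee2 gs.1
      rwa [C.fmap_of hws1 hws2] at this
    · intro w' hw'
      obtain ⟨τ, hτK, hτ3, hτ1, hτ2, hξτ, hrr⟩ :=
        C.reach_back heK he2 heuv hee1 hee2 hfsK hfs3 hfs1 hfs2 hw'
      have hrsτ : (C.Gc e).Reachable s τ := hreach_s.trans hrr
      rcases gs.2 τ hrsτ with h | hp
      · rw [← h] at hξτ
        exact Or.inl hξτ
      · right
        rw [← hξτ]
        exact (C.precInd_iff (C.minpre_tri hτK hτ3 hτ1 hτ2) hmpws).mpr hp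
  have hgt' : GreatestTri (C.Gp e) (precInd C.K C.u C.v C.prec)
      (xi C.u C.v (C.fmap t)) (xi C.u C.v wt) := by
    constructor
    · have := C.reach_fwd heK he2 heuv hee1 hee2 gt.1
      rwa [C.fmap_of hwt1 hwt2] at this
    · intro w' hw'
      obtain ⟨τ, hτK, hτ3, hτ1, hτ2, hξτ, hrr⟩ :=
        C.reach_back heK he2 heuv hee1 hee2 hftK hft3 hft1 hft2 hw'
      have hrtτ : (C.Gc e).Reachable t τ := hreach_t.trans hrr
      rcases gt.2 τ hrtτ with h | hp
      · rw [← h] at hξτ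
        exact Or.inl hξτ
      · right
        rw [← hξτ]
        exact (C.precInd_iff (C.minpre_tri hτK hτ3 hτ1 hτ2) hmpwt).mpr hp
  refine ⟨xi C.u C.v (C.fmap s), xi C.u C.v (C.fmap t), xi C.u C.v ws, xi C.u C.v wt,
    fun hh => (C.fmap_ne he2 heuv hee1 hee2 hsK hs3 hes htK ht3 het hst)
      (C.tri_inj hfsK hfs3 hfs1 hfs2 hftK hft3 hft1 hft2 hh),
    Finset.mem_image_of_mem _ hfsK, Finset.mem_image_of_mem _ hftK,
    by rw [xi_card (C.tri_nb hfsK hfs3 hfs1 hfs2), hfs3],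
    by rw [xi_card (C.tri_nb hftK hft3 hft1 hft2), hft3],
    hfssub, hftsub,
    Finset.mem_image_of_mem _ heK,
    by rw [xi_card (C.edge_nb he2 heuv), he2],
    hnr', hgs', hgt', ?_⟩
  rcases hdisj with ⟨hp, rfl⟩ | ⟨hp, rfl⟩
  · exact Or.inl ⟨(C.precInd_iff hmpws hmpwt).mpr hp, rfl⟩
  · exact Or.inr ⟨(C.precInd_iff hmpwt hmpws).mpr hp, rfl⟩

end Ctx

/-- if `{u,v}` is admissible and the edge `e ∉ {{u,v}, e₁′, e₂′}` is paired
with the triangle `r` in `K`, then `ξ(e)` is paired with `ξ(r)` in the contracted complex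
`K′` with respect to the induced order. -/
theorem contraction_preserves_edge_triangle_pairs
    (K : Finset (Finset V)) (h : Finset V → ℝ) (u v : V)
    (prec : Finset V → Finset V → Prop) (t₁ t₂ e₁ e₁' e₂ e₂' : Finset V)
    (hK : IsComplex K) (hman : ClosedTwoManifold K) (hh : IsHeight K h)
    (hprec : PrecOK K h prec)
    (huv : ({u, v} : Finset V) ∈ K) (hne : u ≠ v) (huvprec : prec {u} {v})
    -- `t₁` and `t₂` are the two triangles of `K` containing `{u,v}`
    (ht1 : t₁ ∈ K) (ht1c : t₁.card = 3) (ht1uv : ({u, v} : Finset V) ⊆ t₁)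
    (ht2 : t₂ ∈ K) (ht2c : t₂.card = 3) (ht2uv : ({u, v} : Finset V) ⊆ t₂)
    (ht12 : t₁ ≠ t₂)
    (honly : ∀ t ∈ K, t.card = 3 → ({u, v} : Finset V) ⊆ t → t = t₁ ∨ t = t₂)
    -- `e₁ ≺ e₁'` are the two edges of `t₁` other than `{u,v}`,
    -- and `e₂ ≺ e₂'` those of `t₂`
    (he1 : e₁ ⊆ t₁) (he1c : e₁.card = 2) (he1uv : e₁ ≠ {u, v})
    (he1' : e₁' ⊆ t₁) (he1'c : e₁'.card = 2) (he1'uv : e₁' ≠ {u, v})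
    (he11' : e₁ ≠ e₁') (hp1 : prec e₁ e₁')
    (he2 : e₂ ⊆ t₂) (he2c : e₂.card = 2) (he2uv : e₂ ≠ {u, v})
    (he2' : e₂' ⊆ t₂) (he2'c : e₂'.card = 2) (he2'uv : e₂' ≠ {u, v})
    (he22' : e₂ ≠ e₂') (hp2 : prec e₂ e₂')
    -- admissibility of `{u,v}`
    (hlink : LinkCond K u v)
    (hpairuv : PairedVE K prec v {u, v})
    (hpair1 : PairedET K prec e₁' t₁)
    (hpair2 : PairedET K prec e₂' t₂)
    -- the edge `e` and its persistence partner `r`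
    (e r : Finset V)
    (hee : e ≠ {u, v}) (hee1 : e ≠ e₁') (hee2 : e ≠ e₂')
    (hpair : PairedET K prec e r) :
    PairedET (K.image (xi u v)) (precInd K u v prec) (xi u v e) (xi u v r) := by
  exact Ctx.main_ctx
    ⟨K, h, u, v, prec, t₁, t₂, e₁, e₁', e₂, e₂', hK, hman, hh, hprec, huv, hne, huvprec,
      ht1, ht1c, ht1uv, ht2, ht2c, ht2uv, ht12, honly, he1, he1c, he1uv, he1', he1'c, he1'uv,
      he11', hp1, he2, he2c, he2uv, he2', he2'c, he2'uv, he22', hp2, hlink, hpairuv,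
      hpair1, hpair2⟩
    e r hee hee1 hee2 hpair
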